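/- arXiv:1906.02587 — 5 statements merged into one kernel-verified Lean document; each statement's English description precedes it below -/
import Mathlib

section
/- Let H : ℂ^n → ℂ^m and G : ℂ^n → ℂ^ℓ be holomorphic maps (defined near the unit sphere S^{2n-1}) with H(S^{2n-1}) ⊆ S^{2m-1} and G(S^{2n-1}) ⊆ S^{2ℓ-1}, and let A ⊆ ℂ^m be a complex linear subspace with orthogonal complement A^⊥. If X : ℂ^n → ℂ^m is holomorphic and satisfies Re(X(z) · conj(H(z))) = 0 for all z ∈ S^{2n-1}, then Y := (X_A ⊗ G) ⊕ X_{A^⊥} satisfies Re(Y(z) · conj(F(z))) = 0 for all z ∈ S^{2n-1}, where F := (H_A ⊗ G) ⊕ H_{A^⊥} and v_A, v_{A^⊥} denote orthogonal projections onto A and A^⊥. -/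
open Finset

/-- If `X` is an infinitesimal deformation of the sphere map `H`
(`Re(X · conj H) = 0` on the sphere), then its tensor product by a sphere map `G` on a
subspace `A`, namely `Y = (X_A ⊗ G) ⊕ X_{A^⊥}`, is an infinitesimal deformation of the
tensored map `F = (H_A ⊗ G) ⊕ H_{A^⊥}`. -/
theorem tensor_of_infinitesimal_deformation
    (n m l : ℕ)
    (U : Set (EuclideanSpace ℂ (Fin n))) (hUopen : IsOpen U)
    (hUS : {z : EuclideanSpace ℂ (Fin n) | ∑ i, ‖z i‖ ^ 2 = 1} ⊆ U)
    (H : EuclideanSpace ℂ (Fin n) → EuclideanSpace ℂ (Fin m))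
    (G : EuclideanSpace ℂ (Fin n) → EuclideanSpace ℂ (Fin l))
    (X : EuclideanSpace ℂ (Fin n) → EuclideanSpace ℂ (Fin m))
    (hH : DifferentiableOn ℂ H U) (hG : DifferentiableOn ℂ G U)
    (hX : DifferentiableOn ℂ X U)
    (hHsphere : ∀ z, (∑ i, ‖z i‖ ^ 2 = 1) → ∑ j, ‖H z j‖ ^ 2 = 1)
    (hGsphere : ∀ z, (∑ i, ‖z i‖ ^ 2 = 1) → ∑ j, ‖G z j‖ ^ 2 = 1)
    (A : Submodule ℂ (EuclideanSpace ℂ (Fin m)))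
    (hXdef : ∀ z, (∑ i, ‖z i‖ ^ 2 = 1) →
      (∑ j, X z j * (starRingEnd ℂ) (H z j)).re = 0) :
    ∀ z, (∑ i, ‖z i‖ ^ 2 = 1) →
      ((∑ p : Fin m × Fin l,
          ((A.orthogonalProjectionOnto (X z) : EuclideanSpace ℂ (Fin m)) p.1 * G z p.2) *
            (starRingEnd ℂ)
              (((A.orthogonalProjectionOnto (H z) : EuclideanSpace ℂ (Fin m)) p.1) * G z p.2)) +
        ∑ j, ((Aᗮ.orthogonalProjectionOnto (X z) : EuclideanSpace ℂ (Fin m)) j) *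
          (starRingEnd ℂ)
            ((Aᗮ.orthogonalProjectionOnto (H z) : EuclideanSpace ℂ (Fin m)) j)).re = 0 := by
  intro z hz
  set a : EuclideanSpace ℂ (Fin m) := (A.orthogonalProjectionOnto (X z) : EuclideanSpace ℂ (Fin m)) with ha
  set b : EuclideanSpace ℂ (Fin m) := (A.orthogonalProjectionOnto (H z) : EuclideanSpace ℂ (Fin m)) with hb
  set a' : EuclideanSpace ℂ (Fin m) := (Aᗮ.orthogonalProjectionOnto (X z) : EuclideanSpace ℂ (Fin m)) with ha'
  set b' : EuclideanSpace ℂ (Fin m) := (Aᗮ.orthogonalProjectionOnto (H z) : EuclideanSpace ℂ (Fin m)) with hb'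
  have hG1 : (∑ k, G z k * (starRingEnd ℂ) (G z k)) = 1 := by
    have h1 := hGsphere z hz
    have : (∑ k, G z k * (starRingEnd ℂ) (G z k)) = ((∑ k, ‖G z k‖ ^ 2 : ℝ) : ℂ) := by
      push_cast
      refine Finset.sum_congr rfl fun k _ => ?_
      rw [Complex.mul_conj']
    rw [this, h1, Complex.ofReal_one]
  have hfirst : (∑ p : Fin m × Fin l, (a p.1 * G z p.2) *
      (starRingEnd ℂ) (b p.1 * G z p.2)) = ∑ j, a j * (starRingEnd ℂ) (b j) := by
    rw [Fintype.sum_prod_type]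
    have : ∀ j, (∑ k, (a j * G z k) * (starRingEnd ℂ) (b j * G z k)) =
        (a j * (starRingEnd ℂ) (b j)) * (∑ k, G z k * (starRingEnd ℂ) (G z k)) := by
      intro j
      rw [Finset.mul_sum]
      refine Finset.sum_congr rfl fun k _ => ?_
      simp only [map_mul]
      ring
    simp only [this, hG1, mul_one]
  rw [hfirst]
  have hinner : ∀ x y : EuclideanSpace ℂ (Fin m), (∑ j, y j * (starRingEnd ℂ) (x j)) = inner ℂ x y := by
    intro x y
    simp only [PiLp.inner_apply, RCLike.inner_apply]
  rw [hinner b a, hinner b' a']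
  have hx : a + a' = X z := A.starProjection_add_starProjection_orthogonal (X z)
  have hh : b + b' = H z := A.starProjection_add_starProjection_orthogonal (H z)
  have c1 : (inner ℂ b a' : ℂ) = 0 :=
    Submodule.inner_right_of_mem_orthogonal (A.orthogonalProjectionOnto (H z)).2
      (Aᗮ.orthogonalProjectionOnto (X z)).2
  have c2 : (inner ℂ b' a : ℂ) = 0 :=
    Submodule.inner_left_of_mem_orthogonal (A.orthogonalProjectionOnto (X z)).2
      (Aᗮ.orthogonalProjectionOnto (H z)).2
  have hdecomp : (inner ℂ (H z) (X z) : ℂ) = inner ℂ b a + inner ℂ b' a' := by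
    rw [← hx, ← hh, inner_add_left, inner_add_right, inner_add_right, c1, c2]
    ring
  have h0 := hXdef z hz
  rw [hinner (H z) (X z), hdecomp] at h0
  exact h0
end

section
/- The homogeneous sphere map H_n^d is holomorphically nondegenerate: if X : ℂ^n → ℂ^{K(n,d)} has holomorphic polynomial components and X(z) · conj(H_n^d(z)) = 0 for all z ∈ S^{2n-1}, then X ≡ 0. -/
open Finset

open MvPolynomial in
private lemma coeff_msum {σ R : Type*} [CommSemiring R] (s : Finset (σ →₀ ℕ))
    (c : (σ →₀ ℕ) → R) (m : σ →₀ ℕ)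
    (hm : m ∈ s) : MvPolynomial.coeff m (∑ d ∈ s, monomial d (c d)) = c m := by
  classical
  rw [MvPolynomial.coeff_sum]
  rw [Finset.sum_eq_single m]
  · simp [coeff_monomial]
  · intro b _ hb
    simp [coeff_monomial, hb]
  · intro h; exact absurd hm h

open MvPolynomial in
private lemma realpts {σ : Type*} (P : MvPolynomial σ ℂ)
    (h : ∀ x : σ → ℝ, eval (fun i => (x i : ℂ)) P = 0) : P = 0 := by
  have aux : ∀ (a p : ℂ), (a.re : ℂ) * p + Complex.I * ((a.im : ℂ) * p) = a * p := by
    intro a p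
    have : ((a.re : ℂ) + (a.im : ℂ) * Complex.I) * p = a * p := by
      rw [Complex.re_add_im]
    rw [← this]; ring
  set A : MvPolynomial σ ℝ := ∑ m ∈ P.support, monomial m ((P.coeff m).re) with hA
  set B : MvPolynomial σ ℝ := ∑ m ∈ P.support, monomial m ((P.coeff m).im) with hB
  have key : ∀ x : σ → ℝ,
      ((eval x A : ℝ) : ℂ) + Complex.I * ((eval x B : ℝ) : ℂ)
        = eval (fun i => (x i : ℂ)) P := by
    intro x
    rw [hA, hB, map_sum, map_sum, eval_eq (fun i => (x i : ℂ)) P]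
    push_cast
    rw [Finset.mul_sum, ← Finset.sum_add_distrib]
    refine Finset.sum_congr rfl fun m hm => ?_
    rw [eval_monomial, eval_monomial]
    simp only [Finsupp.prod]
    push_cast
    exact aux _ _
  have hA0 : A = 0 := by
    apply MvPolynomial.funext
    intro x
    have := key x
    rw [h x] at this
    have h2 := congrArg Complex.re this
    simpa using h2
  have hB0 : B = 0 := by
    apply MvPolynomial.funext
    intro x
    have := key x
    rw [h x, hA0] at this
    have := congrArg Complex.im this
    simpa using this
  ext m
  by_cases hm : m ∈ P.support
  · have h1 : A.coeff m = (P.coeff m).re := coeff_msum _ _ _ hm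
    have h2 : B.coeff m = (P.coeff m).im := coeff_msum _ _ _ hm
    rw [hA0] at h1; rw [hB0] at h2
    simp only [coeff_zero] at h1 h2
    simp [Complex.ext_iff, ← h1, ← h2]
  · simp [MvPolynomial.notMem_support_iff.mp hm]

open MvPolynomial in
private lemma aeval_eq_eval' {σ : Type*} (f : σ → ℂ) (Q : MvPolynomial σ ℂ) :
    aeval f Q = eval f Q := rfl

open MvPolynomial in
private lemma polar {n : ℕ} (P : MvPolynomial (Fin n ⊕ Fin n) ℂ)
    (h : ∀ z : Fin n → ℂ,
      eval (Sum.elim z (fun i => (starRingEnd ℂ) (z i))) P = 0) : P = 0 := by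
  set g : Fin n ⊕ Fin n → MvPolynomial (Fin n ⊕ Fin n) ℂ := fun s =>
    Sum.elim (fun i => X (Sum.inl i) + C Complex.I * X (Sum.inr i))
      (fun i => X (Sum.inl i) - C Complex.I * X (Sum.inr i)) s with hg
  set k : Fin n ⊕ Fin n → MvPolynomial (Fin n ⊕ Fin n) ℂ := fun s =>
    Sum.elim (fun i => C (2⁻¹ : ℂ) * (X (Sum.inl i) + X (Sum.inr i)))
      (fun i => C (-(Complex.I/2)) * (X (Sum.inl i) - X (Sum.inr i))) s with hk
  have hzero : bind₁ g P = 0 := by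
    apply realpts
    intro x
    set z : Fin n → ℂ := fun i => (x (Sum.inl i) : ℂ) + Complex.I * (x (Sum.inr i) : ℂ) with hz
    have hval : (fun s => aeval (R := ℂ) (fun s => ((x s : ℝ) : ℂ)) (g s))
        = Sum.elim z (fun i => (starRingEnd ℂ) (z i)) := by
      funext s
      cases s with
      | inl i => simp [hg, hz]
      | inr i =>
        simp [hg, hz, map_add, Complex.conj_ofReal, map_mul, Complex.conj_I]
        ring
    rw [← aeval_eq_eval', aeval_bind₁, hval, aeval_eq_eval']
    exact h z
  have hcomp : bind₁ k (bind₁ g P) = P := by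
    rw [bind₁_bind₁]
    have hc : (C Complex.I : MvPolynomial (Fin n ⊕ Fin n) ℂ) * C (Complex.I/2)
        = -C (2⁻¹ : ℂ) := by
      rw [← C_mul, ← C_neg]
      congr 1
      rw [div_eq_mul_inv, ← mul_assoc, Complex.I_mul_I]
      ring
    have hd : (C (2⁻¹ : ℂ) : MvPolynomial (Fin n ⊕ Fin n) ℂ) * 2 = 1 := by
      rw [← map_ofNat (C : ℂ →+* MvPolynomial (Fin n ⊕ Fin n) ℂ) 2, ← C_mul]
      norm_num
    have : (fun s => bind₁ k (g s)) = (X : Fin n ⊕ Fin n → MvPolynomial (Fin n ⊕ Fin n) ℂ) := by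
      funext s
      cases s with
      | inl i =>
        simp only [hg, hk, Sum.elim_inl, Sum.elim_inr, map_add, map_sub, map_mul,
          bind₁_X_right, algHom_C, MvPolynomial.algebraMap_eq, map_neg]
        linear_combination (X (Sum.inr i) - X (Sum.inl i)) * hc + X (Sum.inl i) * hd
      | inr i =>
        simp only [hg, hk, Sum.elim_inl, Sum.elim_inr, map_add, map_sub, map_mul,
          bind₁_X_right, algHom_C, MvPolynomial.algebraMap_eq, map_neg]
        linear_combination (X (Sum.inl i) - X (Sum.inr i)) * hc + X (Sum.inr i) * hd
    rw [this]
    simp [bind₁_X_left]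
  rw [hzero] at hcomp
  simpa using hcomp.symm

open MvPolynomial in
private lemma eval_line {n : ℕ} (p : MvPolynomial (Fin n) ℂ) (z : Fin n → ℂ) (t : ℂ) :
    Polynomial.eval t (MvPolynomial.aeval (fun i => Polynomial.C (z i) * Polynomial.X) p)
      = MvPolynomial.eval (fun i => z i * t) p := by
  induction p using MvPolynomial.induction_on with
  | C a => simp
  | add p q hp hq => simp [hp, hq]
  | mul_X p i hp => simp [hp]

private lemma circle_param_injective {r : ℝ} (hr : 0 < r) :
    Function.Injective (fun t : ℝ => (r : ℂ) * (1 + t * Complex.I) / (1 - t * Complex.I)) := by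
  intro t s hts
  have hden : ∀ u : ℝ, (1 : ℂ) - u * Complex.I ≠ 0 := by
    intro u
    intro hu
    have := congrArg Complex.re hu
    simp at this
  have hr' : (r : ℂ) ≠ 0 := by
    simp [Complex.ofReal_ne_zero, hr.ne']
  simp only at hts
  rw [div_eq_div_iff (hden t) (hden s)] at hts
  have hts' : ((1:ℂ) + t * Complex.I) * (1 - s * Complex.I)
      = (1 + s * Complex.I) * (1 - t * Complex.I) :=
    mul_left_cancel₀ hr' (by linear_combination hts)
  have : (t : ℂ) = s :=
    mul_left_cancel₀ (mul_ne_zero two_ne_zero Complex.I_ne_zero)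
      (by linear_combination hts')
  exact_mod_cast this

private lemma circle_param_abs {r : ℝ} (hr : 0 < r) (t : ℝ) :
    ‖(r : ℂ) * (1 + t * Complex.I) / (1 - t * Complex.I)‖ = r := by
  have h1 : (1 : ℂ) - t * Complex.I = (starRingEnd ℂ) (1 + t * Complex.I) := by
    simp [map_add, map_mul, Complex.conj_ofReal, Complex.conj_I]
    ring
  have h2 : (1 : ℂ) + t * Complex.I ≠ 0 := by
    intro hu
    have := congrArg Complex.re hu
    simp at this
  have habs : ‖1 + t * Complex.I‖ ≠ 0 := by
    simpa using h2
  rw [norm_div, norm_mul, h1, Complex.norm_conj, mul_div_assoc, div_self habs, mul_one,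
    Complex.norm_real, Real.norm_eq_abs, abs_of_pos hr]

/-- The homogeneous sphere map `H_n^d` is holomorphically
nondegenerate: if `X` has holomorphic polynomial components (indexed by the
multiindices `α` with `|α| = d`) and `X(z) · conj (H_n^d(z)) = 0` for all
`z ∈ S^{2n-1}`, then `X ≡ 0`. -/
theorem homogeneous_map_holomorphically_nondegenerate (n d : ℕ) (hn : 1 ≤ n)
    (X : (Fin n → ℕ) → MvPolynomial (Fin n) ℂ)
    (hX : ∀ z : Fin n → ℂ, (∑ i, ‖z i‖ ^ 2 = 1) →
      ∑ α ∈ Finset.piAntidiag (Finset.univ : Finset (Fin n)) d,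
        MvPolynomial.eval z (X α) *
          (starRingEnd ℂ)
            ((Real.sqrt (Nat.multinomial Finset.univ α) : ℂ) * ∏ i, z i ^ α i) = 0) :
    ∀ α ∈ Finset.piAntidiag (Finset.univ : Finset (Fin n)) d, X α = 0 := by
  classical
  have : NeZero n := ⟨by omega⟩
  set A : Finset (Fin n → ℕ) := Finset.piAntidiag (Finset.univ : Finset (Fin n)) d with hAdef
  set c : (Fin n → ℕ) → ℂ := fun α => ((Real.sqrt (Nat.multinomial Finset.univ α) : ℝ) : ℂ)
    with hc
  have hcne : ∀ α, c α ≠ 0 := by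
    intro α
    rw [hc]
    simp only [ne_eq, Complex.ofReal_eq_zero]
    have : (0:ℝ) < Real.sqrt (Nat.multinomial Finset.univ α) :=
      Real.sqrt_pos.mpr (by exact_mod_cast Nat.multinomial_pos Finset.univ α)
    exact this.ne'
  -- Step 1: dilation/rotation argument
  have key1 : ∀ z : Fin n → ℂ, z ≠ 0 → ∀ t : ℂ,
      ∑ α ∈ A, MvPolynomial.eval (fun i => z i * t) (X α) *
        (c α * ∏ i, (starRingEnd ℂ) (z i) ^ α i) = 0 := by
    intro z hz t
    set S : ℝ := ∑ i, ‖z i‖ ^ 2 with hS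
    have hS0 : 0 < S := by
      obtain ⟨i0, hi0⟩ : ∃ i, z i ≠ 0 := by
        by_contra hcon
        push_neg at hcon
        exact hz (funext fun i => hcon i)
      refine Finset.sum_pos' (fun i _ => by positivity)
        ⟨i0, Finset.mem_univ _, pow_pos (norm_pos_iff.mpr hi0) 2⟩
    set r : ℝ := 1 / Real.sqrt S with hrdef
    have hr : 0 < r := by
      rw [hrdef]
      positivity
    set q : Polynomial ℂ := ∑ α ∈ A,
      (MvPolynomial.aeval (fun i => Polynomial.C (z i) * Polynomial.X) (X α)) *
        Polynomial.C (c α * ∏ i, (starRingEnd ℂ) (z i) ^ α i) with hq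
    have hqeval : ∀ lam : ℂ, q.eval lam
        = ∑ α ∈ A, MvPolynomial.eval (fun i => z i * lam) (X α) *
          (c α * ∏ i, (starRingEnd ℂ) (z i) ^ α i) := by
      intro lam
      rw [hq, Polynomial.eval_finset_sum]
      refine Finset.sum_congr rfl fun α hα => ?_
      rw [Polynomial.eval_mul, Polynomial.eval_C, eval_line]
    have hroot : ∀ lam : ℂ, ‖lam‖ = r → q.eval lam = 0 := by
      intro lam hlam
      have hlamne : lam ≠ 0 := by
        intro h0
        apply hr.ne'
        rw [← hlam, h0]
        simp
      have hsphere : ∑ i, ‖lam * z i‖ ^ 2 = 1 := by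
        have h1 : ∀ i : Fin n, ‖lam * z i‖ ^ 2 = ‖lam‖ ^ 2 * ‖z i‖ ^ 2 := by
          intro i; rw [norm_mul]; ring
        rw [Finset.sum_congr rfl fun i _ => h1 i, ← Finset.mul_sum, ← hS]
        have hn2 : ‖lam‖ = r := by rw [← hlam]
        rw [hn2, hrdef, div_pow, one_pow, Real.sq_sqrt hS0.le]
        field_simp
      have hs := hX (fun i => lam * z i) hsphere
      have hterm : ∀ α ∈ A, MvPolynomial.eval (fun i => lam * z i) (X α) *
            (starRingEnd ℂ) ((Real.sqrt (Nat.multinomial Finset.univ α) : ℂ) *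
              ∏ i, (lam * z i) ^ α i)
          = (starRingEnd ℂ) lam ^ d *
            (MvPolynomial.eval (fun i => lam * z i) (X α) *
              (c α * ∏ i, (starRingEnd ℂ) (z i) ^ α i)) := by
        intro α hα
        obtain ⟨hsum, -⟩ := Finset.mem_piAntidiag.mp hα
        simp only [map_mul, map_prod, map_pow, Complex.conj_ofReal, mul_pow]
        rw [Finset.prod_mul_distrib, Finset.prod_pow_eq_pow_sum, hsum]
        simp only [hc]
        ring
      rw [Finset.sum_congr rfl hterm, ← Finset.mul_sum] at hs
      have hconj : (starRingEnd ℂ) lam ^ d ≠ 0 :=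
        pow_ne_zero _ (by simpa using hlamne)
      have h0 := (mul_eq_zero.mp hs).resolve_left hconj
      rw [hqeval lam,
        show (fun i => z i * lam) = (fun i => lam * z i) from funext fun i => mul_comm _ _]
      exact h0
    have hq0 : q = 0 := by
      apply Polynomial.eq_zero_of_infinite_isRoot
      apply Set.infinite_of_injective_forall_mem (circle_param_injective hr)
      intro t'
      exact hroot _ (circle_param_abs hr t')
    have := hqeval t
    rw [hq0, Polynomial.eval_zero] at this
    exact this.symm
  -- Step 2: the big polynomial in 2n variables
  set P : MvPolynomial (Fin n ⊕ Fin n) ℂ := ∑ α ∈ A,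
      MvPolynomial.rename Sum.inl (X α) * MvPolynomial.C (c α) *
        ∏ i, MvPolynomial.X (Sum.inr i) ^ α i with hP
  have hPeval : ∀ z w : Fin n → ℂ, MvPolynomial.eval (Sum.elim z w) P
      = ∑ α ∈ A, MvPolynomial.eval z (X α) * (c α * ∏ i, w i ^ α i) := by
    intro z w
    rw [hP, map_sum]
    refine Finset.sum_congr rfl fun α hα => ?_
    rw [map_mul, map_mul, MvPolynomial.eval_rename, MvPolynomial.eval_C, map_prod]
    simp only [map_pow, MvPolynomial.eval_X, Sum.elim_inr]
    rw [show Sum.elim z w ∘ Sum.inl = z from funext fun i => rfl]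
    ring
  have hP0 : P = 0 := by
    apply polar
    intro z
    rw [hPeval]
    by_cases hz : z = 0
    · subst hz
      rcases Nat.eq_zero_or_pos d with hd | hd
      · subst hd
        have h1 := key1 (fun _ => (1:ℂ)) (by
          intro hcon
          have := congrFun hcon ⟨0, by omega⟩
          simp at this) 0
        have hα0 : ∀ α ∈ A, ∀ i, α i = 0 := by
          intro α hα i
          obtain ⟨hsum, -⟩ := Finset.mem_piAntidiag.mp hα
          exact (Finset.sum_eq_zero_iff.mp hsum) i (Finset.mem_univ i)
        have hfz : (fun _ : Fin n => (1:ℂ) * 0) = (0 : Fin n → ℂ) := by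
          funext i; simp
        rw [hfz] at h1
        have h2 : ∀ α ∈ A, MvPolynomial.eval (0 : Fin n → ℂ) (X α) *
            (c α * ∏ i, (starRingEnd ℂ) ((0 : Fin n → ℂ) i) ^ α i)
            = MvPolynomial.eval (0 : Fin n → ℂ) (X α) * c α := by
          intro α hα
          rw [Finset.prod_congr rfl fun i _ => by rw [hα0 α hα i, pow_zero]]
          simp
        rw [Finset.sum_congr rfl h2]
        simpa using h1
      · apply Finset.sum_eq_zero
        intro α hα
        obtain ⟨hsum, -⟩ := Finset.mem_piAntidiag.mp hα
        obtain ⟨i0, hi0⟩ : ∃ i, α i ≠ 0 := by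
          by_contra hcon
          push_neg at hcon
          rw [Finset.sum_eq_zero (fun i _ => hcon i)] at hsum
          omega
        have : (∏ i, (starRingEnd ℂ) ((0 : Fin n → ℂ) i) ^ α i) = 0 := by
          apply Finset.prod_eq_zero (Finset.mem_univ i0)
          simp [zero_pow hi0]
        rw [this]
        ring
    · have := key1 z hz 1
      simpa using this
  -- Step 3: extract coefficients
  intro α₀ hα₀
  have heval0 : ∀ z : Fin n → ℂ, MvPolynomial.eval z (X α₀) = 0 := by
    intro z
    set Q : MvPolynomial (Fin n) ℂ := ∑ α ∈ A,
        MvPolynomial.monomial (Finsupp.equivFunOnFinite.symm α)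
          (MvPolynomial.eval z (X α) * c α) with hQ
    have hQ0 : Q = 0 := by
      apply MvPolynomial.funext
      intro w
      rw [hQ, map_sum]
      have h00 : (0 : ℂ) = MvPolynomial.eval (Sum.elim z w) P := by rw [hP0]; simp
      conv_rhs => rw [map_zero, h00, hPeval]
      refine Finset.sum_congr rfl fun α hα => ?_
      rw [MvPolynomial.eval_monomial]
      rw [Finsupp.prod_fintype _ _ (fun i => pow_zero (w i))]
      simp only [Finsupp.coe_equivFunOnFinite_symm]
      ring
    have hco : MvPolynomial.coeff (Finsupp.equivFunOnFinite.symm α₀) Q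
        = MvPolynomial.eval z (X α₀) * c α₀ := by
      rw [hQ, MvPolynomial.coeff_sum, Finset.sum_eq_single α₀]
      · simp [MvPolynomial.coeff_monomial]
      · intro b _ hb
        rw [MvPolynomial.coeff_monomial, if_neg]
        intro hbe
        exact hb (Finsupp.equivFunOnFinite.symm.injective hbe)
      · intro h
        exact absurd hα₀ h
    rw [hQ0] at hco
    simp only [MvPolynomial.coeff_zero] at hco
    have := hco.symm
    rcases mul_eq_zero.mp this with h | h
    · exact h
    · exact absurd h (hcne α₀)
  exact MvPolynomial.funext fun x => by rw [heval0 x, map_zero]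
end

section
/- Let H : S^{2n-1} → S^{2m-1} be a rational sphere map of degree d with reflection matrix V of size K(n,d) × m. If K(n,d) < m, then H is holomorphically degenerate: there exists a nontrivial holomorphic polynomial map Y : ℂ^n → ℂ^m with Y(z) · conj(H(z)) = 0 for all z ∈ S^{2n-1}. -/
open Finset

private lemma aux_relation {R : Type*} [CommRing R] [IsDomain R]
    {m : ℕ} {T : Type*} [Fintype T] (hT : Fintype.card T < m)
    (c : Fin m → T → R) :
    ∃ y : Fin m → R, (∃ j, y j ≠ 0) ∧ ∀ t, ∑ j, y j * c j t = 0 := by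
  classical
  let F := FractionRing R
  let φ : (Fin m → F) →ₗ[F] (T → F) :=
    { toFun := fun Y t => ∑ j, Y j * algebraMap R F (c j t)
      map_add' := by intro a b; funext t; simp [add_mul, Finset.sum_add_distrib]
      map_smul' := by intro r a; funext t; simp [Finset.mul_sum, mul_assoc]; rw [Finset.mul_sum] }
  have hninj : ¬ Function.Injective φ := by
    intro hinj
    have h2 := LinearMap.finrank_le_finrank_of_injective hinj
    rw [Module.finrank_fintype_fun_eq_card, Module.finrank_fintype_fun_eq_card,
      Fintype.card_fin] at h2
    omega
  obtain ⟨a, b, hab, hne⟩ := Function.not_injective_iff.mp hninj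
  set Y : Fin m → F := a - b with hY
  have hY0 : φ Y = 0 := by rw [map_sub, hab, sub_self]
  have hYne : ∃ j, Y j ≠ 0 := by
    by_contra h
    push_neg at h
    apply hne
    funext j
    have := h j
    simpa [hY, sub_eq_zero] using this
  have hY0' : ∀ t, ∑ j, Y j * algebraMap R F (c j t) = 0 := by
    intro t
    have := congrFun hY0 t
    simpa [φ] using this
  obtain ⟨bb, hb⟩ := IsLocalization.exist_integer_multiples_of_finite
    (nonZeroDivisors R) Y
  choose y hy using hb
  have hinj : Function.Injective (algebraMap R F) := IsFractionRing.injective R F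
  have hbne : algebraMap R F (bb : R) ≠ 0 := by
    intro h
    exact nonZeroDivisors.coe_ne_zero bb (hinj (by simp [h]))
  refine ⟨y, ?_, ?_⟩
  · obtain ⟨j, hj⟩ := hYne
    refine ⟨j, fun h0 => hj ?_⟩
    have := hy j
    rw [h0, map_zero, Algebra.smul_def] at this
    exact (mul_eq_zero.mp this.symm).resolve_left hbne
  · intro t
    apply hinj
    rw [map_sum, map_zero]
    have : ∑ j, algebraMap R F (y j * c j t)
        = algebraMap R F (bb : R) * ∑ j, Y j * algebraMap R F (c j t) := by
      rw [Finset.mul_sum]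
      refine Finset.sum_congr rfl fun j _ => ?_
      rw [map_mul, hy j, Algebra.smul_def]
      ring
    rw [this, hY0' t, mul_zero]

private lemma aux_isHomogeneous_map {σ : Type*} {R S : Type*} [CommSemiring R] [CommSemiring S]
    (f : R →+* S) {φ : MvPolynomial σ R} {k : ℕ} (h : φ.IsHomogeneous k) :
    (φ.map f).IsHomogeneous k := by
  intro a ha
  apply h
  rw [MvPolynomial.coeff_map] at ha
  exact fun h0 => ha (by rw [h0, map_zero])

/-- If a rational sphere map `H : S^{2n-1} → S^{2m-1}` of degree `d`
satisfies `K(n,d) = C(n+d-1,d) < m`, then `H` is holomorphically degenerate: there is a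
nontrivial holomorphic polynomial map `Y : ℂⁿ → ℂᵐ` with `Y · conj H = 0` on the
sphere. -/
theorem small_target_dimension_implies_degenerate
    (n m d : ℕ) (hn : 2 ≤ n)
    (hK : (n + d - 1).choose d < m)
    (U : Set (Fin n → ℂ)) (hUopen : IsOpen U)
    (hUS : {z : Fin n → ℂ | ∑ i, ‖z i‖ ^ 2 = 1} ⊆ U)
    (P : Fin m → MvPolynomial (Fin n) ℂ) (Q : MvPolynomial (Fin n) ℂ)
    (hPdeg : ∀ j, (P j).totalDegree ≤ d) (hQdeg : Q.totalDegree ≤ d)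
    (hQ : ∀ z ∈ U, MvPolynomial.eval z Q ≠ 0)
    (H : (Fin n → ℂ) → (Fin m → ℂ))
    (hH : ∀ z ∈ U, ∀ j, H z j = MvPolynomial.eval z (P j) / MvPolynomial.eval z Q)
    (hHsphere : ∀ z, (∑ i, ‖z i‖ ^ 2 = 1) → ∑ j, ‖H z j‖ ^ 2 = 1) :
    ∃ Y : Fin m → MvPolynomial (Fin n) ℂ,
      (∃ j, Y j ≠ 0) ∧
      ∀ z, (∑ i, ‖z i‖ ^ 2 = 1) →
        ∑ j, MvPolynomial.eval z (Y j) * (starRingEnd ℂ) (H z j) = 0 := by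
  classical
  open MvPolynomial in
  -- conjugated numerators
  set Pb : Fin m → MvPolynomial (Fin n) ℂ := fun j => (P j).map (starRingEnd ℂ) with hPb
  have hPbdeg : ∀ j, (Pb j).totalDegree ≤ d := by
    intro j
    refine le_trans (Finset.sup_mono (MvPolynomial.support_map_subset _ _)) (hPdeg j)
  -- the two-variable (bi-degree) polynomial ring: variables `w`, coefficients in `ℂ[z]`
  set L : MvPolynomial (Fin n) (MvPolynomial (Fin n) ℂ) :=
    ∑ i, (MvPolynomial.C (MvPolynomial.X i) * MvPolynomial.X i) with hL
  set S : Fin m → MvPolynomial (Fin n) (MvPolynomial (Fin n) ℂ) := fun j =>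
    ∑ k ∈ Finset.range (d+1), L ^ (d - k) *
      ((MvPolynomial.homogeneousComponent k (Pb j)).map MvPolynomial.C) with hS
  -- each `S j` is homogeneous of degree `d` in `w`
  have hLhom : L.IsHomogeneous 1 := by
    apply MvPolynomial.IsHomogeneous.sum
    intro i _
    exact (MvPolynomial.isHomogeneous_X _ i).C_mul _
  have hShom : ∀ j, (S j).IsHomogeneous d := by
    intro j
    apply MvPolynomial.IsHomogeneous.sum
    intro k hk
    rw [Finset.mem_range, Nat.lt_succ_iff] at hk
    have h1 : (L ^ (d - k)).IsHomogeneous (d - k) := by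
      simpa using hLhom.pow (d - k)
    have h2 : ((MvPolynomial.homogeneousComponent k (Pb j)).map
        (MvPolynomial.C : ℂ →+* MvPolynomial (Fin n) ℂ)).IsHomogeneous k :=
      aux_isHomogeneous_map _ (MvPolynomial.homogeneousComponent_isHomogeneous k (Pb j))
    have := h1.mul h2
    rwa [Nat.sub_add_cancel hk] at this
  -- the support of all `S j` injects into `Sym (Fin n) d`
  set T : Finset (Fin n →₀ ℕ) := Finset.univ.biUnion (fun j => (S j).support) with hT
  have hTdeg : ∀ α ∈ T, (α.sum fun _ e => e) = d := by
    intro α hα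
    rw [hT, Finset.mem_biUnion] at hα
    obtain ⟨j, -, hαj⟩ := hα
    rw [MvPolynomial.mem_support_iff] at hαj
    by_contra hne
    exact hαj ((hShom j).coeff_eq_zero (by exact hne))
  have hTcard : T.card < m := by
    have hcard : T.card ≤ Fintype.card (Sym (Fin n) d) := by
      rw [← Fintype.card_coe T]
      have h0 : (0 : ℕ) < n := by omega
      refine Fintype.card_le_of_injective
        (fun t => (⟨Finsupp.toMultiset t.1, by
          rw [Finsupp.card_toMultiset]
          exact hTdeg t.1 t.2⟩ : Sym (Fin n) d)) ?_
      intro s t hst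
      have : Finsupp.toMultiset s.1 = Finsupp.toMultiset t.1 := congrArg Sym.toMultiset hst
      have h2 : s.1 = t.1 := by
        have := congrArg Multiset.toFinsupp this
        rwa [Finsupp.toMultiset_toFinsupp, Finsupp.toMultiset_toFinsupp] at this
      exact Subtype.ext h2
    calc T.card ≤ Fintype.card (Sym (Fin n) d) := hcard
      _ = (n + d - 1).choose d := by
          rw [Sym.card_sym_eq_choose, Fintype.card_fin]
      _ < m := hK
  -- the nontrivial polynomial relation
  have hTcard' : Fintype.card {α // α ∈ T} < m := by
    rwa [Fintype.card_coe]
  obtain ⟨y, hyne, hyrel⟩ := aux_relation hTcard'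
    (fun j (t : {α // α ∈ T}) => MvPolynomial.coeff t.1 (S j))
  have hyrel' : ∀ α : Fin n →₀ ℕ, ∑ j, y j * MvPolynomial.coeff α (S j) = 0 := by
    intro α
    by_cases hα : α ∈ T
    · exact hyrel ⟨α, hα⟩
    · apply Finset.sum_eq_zero
      intro j _
      have : α ∉ (S j).support := fun h => hα (Finset.mem_biUnion.mpr ⟨j, Finset.mem_univ _, h⟩)
      rw [MvPolynomial.notMem_support_iff] at this
      rw [this, mul_zero]
  have hZ : ∑ j, MvPolynomial.C (y j) * S j = 0 := by
    apply MvPolynomial.ext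
    intro α
    rw [MvPolynomial.coeff_sum, MvPolynomial.coeff_zero]
    simpa [MvPolynomial.coeff_C_mul] using hyrel' α
  refine ⟨y, hyne, ?_⟩
  intro z hz
  have hzU : z ∈ U := hUS hz
  -- the evaluation homomorphism at `(z, conj z)`
  set w : Fin n → ℂ := fun i => (starRingEnd ℂ) (z i) with hw
  set E : MvPolynomial (Fin n) (MvPolynomial (Fin n) ℂ) →+* ℂ :=
    MvPolynomial.eval₂Hom (MvPolynomial.eval z) w with hE
  have hEL : E L = 1 := by
    rw [hL, map_sum]
    have : ∀ i, E (MvPolynomial.C (MvPolynomial.X i) * MvPolynomial.X i)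
        = z i * (starRingEnd ℂ) (z i) := by
      intro i
      simp [hE, hw]
    rw [Finset.sum_congr rfl fun i _ => this i]
    have : ∀ i, z i * (starRingEnd ℂ) (z i) = ((‖z i‖ ^ 2 : ℝ) : ℂ) := by
      intro i
      rw [Complex.mul_conj']
      push_cast
      ring
    rw [Finset.sum_congr rfl fun i _ => this i, ← Complex.ofReal_sum, hz, Complex.ofReal_one]
  have hEC : ∀ q : MvPolynomial (Fin n) ℂ,
      E (q.map (MvPolynomial.C : ℂ →+* MvPolynomial (Fin n) ℂ)) = MvPolynomial.eval w q := by
    intro q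
    rw [hE, MvPolynomial.eval₂Hom_map_hom]
    have hcomp : (MvPolynomial.eval z).comp (MvPolynomial.C : ℂ →+* MvPolynomial (Fin n) ℂ)
        = RingHom.id ℂ := by
      ext r
      simp
    rw [hcomp]
    simp [MvPolynomial.eval₂Hom]
  have hES : ∀ j, E (S j) = (starRingEnd ℂ) (MvPolynomial.eval z (P j)) := by
    intro j
    rw [hS]
    simp only [map_sum, map_mul, map_pow, hEL, one_pow, one_mul]
    rw [Finset.sum_congr rfl fun k _ => hEC _]
    have hsum : ∑ k ∈ Finset.range (d+1),
        MvPolynomial.eval w (MvPolynomial.homogeneousComponent k (Pb j))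
        = MvPolynomial.eval w (Pb j) := by
      rw [← map_sum]
      congr 1
      have h1 : Finset.range ((Pb j).totalDegree + 1) ⊆ Finset.range (d + 1) := by
        intro k hk
        rw [Finset.mem_range] at hk ⊢
        have := hPbdeg j
        omega
      have h2 : ∀ k ∈ Finset.range (d + 1), k ∉ Finset.range ((Pb j).totalDegree + 1) →
          MvPolynomial.homogeneousComponent k (Pb j) = 0 := by
        intro k _ hk
        rw [Finset.mem_range, not_lt] at hk
        exact MvPolynomial.homogeneousComponent_eq_zero k (Pb j) (Nat.lt_of_succ_le hk)
      calc ∑ k ∈ Finset.range (d + 1), MvPolynomial.homogeneousComponent k (Pb j)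
          = ∑ k ∈ Finset.range ((Pb j).totalDegree + 1),
              MvPolynomial.homogeneousComponent k (Pb j) := (Finset.sum_subset h1 h2).symm
        _ = Pb j := MvPolynomial.sum_homogeneousComponent (Pb j)
    rw [hsum]
    have hconj : (starRingEnd ℂ) (MvPolynomial.eval z (P j))
        = MvPolynomial.eval₂ (starRingEnd ℂ) w (P j) := by
      rw [← MvPolynomial.eval₂_id (P j), MvPolynomial.eval₂_comp_left (starRingEnd ℂ)]
      simp only [RingHom.comp_id]
      rfl
    rw [hconj]
    show MvPolynomial.eval w ((P j).map (starRingEnd ℂ)) = _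
    rw [MvPolynomial.eval_map]
  -- put everything together
  have hmain : ∑ j, MvPolynomial.eval z (y j) * (starRingEnd ℂ) (MvPolynomial.eval z (P j))
      = 0 := by
    have := congrArg E hZ
    rw [map_sum, map_zero] at this
    rw [← this]
    refine Finset.sum_congr rfl fun j _ => ?_
    rw [map_mul, hES j]
    congr 1
    simp [hE]
  have hQz := hQ z hzU
  calc ∑ j, MvPolynomial.eval z (y j) * (starRingEnd ℂ) (H z j)
      = ∑ j, MvPolynomial.eval z (y j) *
          ((starRingEnd ℂ) (MvPolynomial.eval z (P j)) / (starRingEnd ℂ) (MvPolynomial.eval z Q))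
        := by
          refine Finset.sum_congr rfl fun j _ => ?_
          rw [hH z hzU j, map_div₀]
    _ = (∑ j, MvPolynomial.eval z (y j) * (starRingEnd ℂ) (MvPolynomial.eval z (P j)))
          / (starRingEnd ℂ) (MvPolynomial.eval z Q) := by
          rw [Finset.sum_div]
          refine Finset.sum_congr rfl fun j _ => ?_
          rw [mul_div_assoc]
    _ = 0 := by rw [hmain, zero_div]
end

section
/- Let H : S^{2n-1} → S^{2m-1} be a polynomial sphere map of degree d with reflection matrix V_H satisfying V_H X · conj(H_n^d) = X · conj(H) on S^{2n-1} for all X ∈ ℂ^m. Then V_H H = H_n^d and H = transpose(conj(V_H)) H_n^d on S^{2n-1}. -/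
open Finset

/-- The component of the homogeneous sphere map `H_n^d` at the multiindex `α`:
`√(d!/α!) z^α`. -/
noncomputable def homComp {n : ℕ} (α : Fin n → ℕ) (z : Fin n → ℂ) : ℂ :=
  (Real.sqrt (Nat.multinomial Finset.univ α) : ℂ) * ∏ i, z i ^ α i

section Aux

open MvPolynomial

/-- A multivariate polynomial over ℂ vanishing on a product of infinite sets is zero. -/
theorem mv_zero_of_eval_zero : ∀ {k : ℕ} (p : MvPolynomial (Fin k) ℂ) (S : Fin k → Set ℂ),
    (∀ i, (S i).Infinite) → (∀ x : Fin k → ℂ, (∀ i, x i ∈ S i) → eval x p = 0) → p = 0 := by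
  intro k
  induction k with
  | zero =>
    intro p S hS h
    rw [p.eq_C_of_isEmpty]
    have := h (fun i => 0) (fun i => i.elim0)
    rw [p.eq_C_of_isEmpty, eval_C] at this
    rw [this, map_zero]
  | succ k ih =>
    intro p S hS h
    have key : ∀ x : Fin k → ℂ, (∀ i, x i ∈ S i.succ) →
        Polynomial.map (eval x) (finSuccEquiv ℂ k p) = 0 := by
      intro x hx
      apply Polynomial.eq_zero_of_infinite_isRoot
      apply Set.Infinite.mono (s := S 0) _ (hS 0)
      intro y hy
      simp only [Set.mem_setOf_eq, Polynomial.IsRoot]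
      rw [← eval_eq_eval_mv_eval']
      apply h
      intro i
      refine Fin.cases ?_ ?_ i
      · simpa using hy
      · intro j; simpa [Fin.cons_succ] using hx j
    have hq : finSuccEquiv ℂ k p = 0 := by
      apply Polynomial.ext
      intro j
      rw [Polynomial.coeff_zero]
      apply ih _ (fun i => S i.succ) (fun i => hS i.succ)
      intro x hx
      have := key x hx
      have := congrArg (fun q => Polynomial.coeff q j) this
      simpa using this
    have := congrArg (finSuccEquiv ℂ k).symm hq
    simpa using this

theorem simplex_coeffs_zero {n d : ℕ} (hn : 0 < n) (c : (Fin n → ℕ) → ℂ)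
    (h : ∀ t : Fin n → ℝ, (∀ i, 0 < t i) → (∑ i, t i = 1) →
      ∑ α ∈ Finset.piAntidiag (Finset.univ : Finset (Fin n)) d,
        c α * ∏ i, (t i : ℂ) ^ α i = 0) :
    ∀ α ∈ Finset.piAntidiag (Finset.univ : Finset (Fin n)) d, c α = 0 := by
  classical
  set A := Finset.piAntidiag (Finset.univ : Finset (Fin n)) d with hA
  set p : MvPolynomial (Fin n) ℂ :=
    ∑ α ∈ A, monomial (Finsupp.equivFunOnFinite.symm α) (c α) with hp
  have heval : ∀ x : Fin n → ℂ, eval x p = ∑ α ∈ A, c α * ∏ i, x i ^ α i := by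
    intro x
    rw [hp, map_sum]
    refine Finset.sum_congr rfl fun α _ => ?_
    rw [eval_monomial]
    congr 1
    rw [Finsupp.prod_fintype]
    · simp
    · intro i; simp
  have hp0 : p = 0 := by
    apply mv_zero_of_eval_zero p (fun _ => {z : ℂ | ∃ r : ℝ, 0 < r ∧ z = (r : ℝ)})
    · intro i
      apply Set.infinite_coe_iff.mp
      refine Set.infinite_coe_iff.mpr ?_
      have : Set.InjOn (fun r : ℝ => (r : ℂ)) (Set.Ioi 0) :=
        Complex.ofReal_injective.injOn
      have h2 : ((fun r : ℝ => (r : ℂ)) '' Set.Ioi 0).Infinite :=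
        Set.Infinite.image this (Set.Ioi_infinite 0)
      apply h2.mono
      rintro z ⟨r, hr, rfl⟩
      exact ⟨r, hr, rfl⟩
    · intro x hx
      choose s hs hsx using hx
      have hxs : x = fun i => (s i : ℂ) := funext hsx
      subst hxs
      set T : ℝ := ∑ i, s i with hT
      have hTpos : 0 < T := Finset.sum_pos (fun i _ => hs i) (univ_nonempty_iff.mpr ⟨⟨0, hn⟩⟩)
      have ht := h (fun i => s i / T) (fun i => div_pos (hs i) hTpos) (by
        rw [← Finset.sum_div, ← hT, div_self hTpos.ne'])
      rw [heval]
      have : ∀ α ∈ A, c α * ∏ i, ((s i : ℂ)) ^ α i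
          = (T : ℂ) ^ d * (c α * ∏ i, ((s i / T : ℝ) : ℂ) ^ α i) := by
        intro α hα
        rw [Finset.mem_piAntidiag] at hα
        have hαd : ∑ i, α i = d := hα.1
        push_cast
        rw [mul_comm ((T:ℂ)^d), mul_assoc]
        congr 1
        rw [← hαd, ← Finset.prod_pow_eq_pow_sum, ← Finset.prod_mul_distrib]
        refine Finset.prod_congr rfl fun i _ => ?_
        rw [div_pow]
        exact (div_mul_cancel₀ _ (pow_ne_zero _ (by exact_mod_cast hTpos.ne'))).symm
      rw [Finset.sum_congr rfl this, ← Finset.mul_sum, ht, mul_zero]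
  intro α hα
  have : coeff (Finsupp.equivFunOnFinite.symm α) p = c α := by
    rw [hp, coeff_sum]
    rw [Finset.sum_eq_single α]
    · simp [coeff_monomial]
    · intro β hβ hne
      rw [coeff_monomial, if_neg]
      intro hcontra
      exact hne (by simpa using congrArg Finsupp.equivFunOnFinite hcontra)
    · intro hcontra; exact absurd hα hcontra
  rw [hp0] at this
  simpa using this.symm

lemma eval_bind₁' {n : ℕ} (x : Fin n → ℂ) (g : Fin n → MvPolynomial (Fin n) ℂ)
    (φ : MvPolynomial (Fin n) ℂ) :
    eval x (bind₁ g φ) = eval (fun i => eval x (g i)) φ := by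
  show eval₂Hom (RingHom.id ℂ) x (bind₁ g φ) = _
  rw [eval₂Hom_bind₁]
  rfl

lemma circle_infinite : ({c : ℂ | ‖c‖ = 1}).Infinite := by
  have hinj : Set.InjOn (fun θ : ℝ => Complex.exp (θ * Complex.I)) (Set.Ioo 0 1) := by
    intro a ha b hb hab
    simp only at hab
    rw [Complex.exp_eq_exp_iff_exists_int] at hab
    obtain ⟨k, hk⟩ := hab
    have hk' : (a : ℂ) = b + k * (2 * Real.pi) := by
      have := hk
      field_simp at this ⊢
      have hI : ((a : ℂ) - b - k * (2 * Real.pi)) * Complex.I = 0 := by ring_nf; ring_nf at this; linear_combination Complex.I * this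
      rcases mul_eq_zero.mp hI with h | h
      · linear_combination h
      · exact absurd h Complex.I_ne_zero
    have hkr : a = b + k * (2 * Real.pi) := by exact_mod_cast hk'
    have hpi : (6 : ℝ) < 2 * Real.pi := by
      have := Real.pi_gt_three; linarith
    have hk0 : k = 0 := by
      by_contra hk0
      have h1 : (1 : ℝ) ≤ |(k : ℝ)| := by
        have := Int.one_le_abs hk0
        exact_mod_cast this
      have h3 : (k : ℝ) * (2 * Real.pi) = a - b := by linarith
      have h4 : |a - b| < 1 := abs_lt.mpr ⟨by linarith [ha.1, ha.2, hb.1, hb.2], by linarith [ha.1, ha.2, hb.1, hb.2]⟩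
      have h5 : |(k : ℝ) * (2 * Real.pi)| = |(k : ℝ)| * (2 * Real.pi) := by
        rw [abs_mul, abs_of_pos (show (0:ℝ) < 2 * Real.pi by linarith)]
      rw [h3] at h5
      nlinarith
    rw [hk0] at hkr; push_cast at hkr; linarith
  have := (Set.Ioo_infinite (by norm_num : (0:ℝ) < 1)).image hinj
  apply this.mono
  rintro z ⟨θ, hθ, rfl⟩
  simp only [Set.mem_setOf_eq]
  exact Complex.norm_exp_ofReal_mul_I θ

theorem keyC {n d : ℕ} (hn : 0 < n) (R : (Fin n → ℕ) → MvPolynomial (Fin n) ℂ)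
    (h : ∀ z : Fin n → ℂ, (∑ i, ‖z i‖ ^ 2 = 1) →
      ∑ α ∈ Finset.piAntidiag (Finset.univ : Finset (Fin n)) d,
        eval z (R α) * ∏ i, (starRingEnd ℂ) (z i) ^ α i = 0) :
    ∀ α ∈ Finset.piAntidiag (Finset.univ : Finset (Fin n)) d, R α = 0 := by
  classical
  set A := Finset.piAntidiag (Finset.univ : Finset (Fin n)) d with hA
  have hle : ∀ α ∈ A, ∀ i, α i ≤ d := by
    intro α hα i
    rw [Finset.mem_piAntidiag] at hα
    exact hα.1 ▸ Finset.single_le_sum (fun j _ => Nat.zero_le _) (mem_univ i)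
  -- Step 1: free the torus variable
  have E1 : ∀ z : Fin n → ℂ, (∑ i, ‖z i‖ ^ 2 = 1) → ∀ lam : Fin n → ℂ,
      ∑ α ∈ A, eval (fun i => lam i * z i) (R α) * (∏ i, lam i ^ (d - α i)) *
        (∏ i, (starRingEnd ℂ) (z i) ^ α i) = 0 := by
    intro z hz
    set Φ : MvPolynomial (Fin n) ℂ :=
      ∑ α ∈ A, (bind₁ (fun i => C (z i) * X i) (R α)) * (∏ i, X i ^ (d - α i)) *
        C (∏ i, (starRingEnd ℂ) (z i) ^ α i) with hΦ
    have hevalΦ : ∀ lam : Fin n → ℂ, eval lam Φ =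
        ∑ α ∈ A, eval (fun i => lam i * z i) (R α) * (∏ i, lam i ^ (d - α i)) *
          (∏ i, (starRingEnd ℂ) (z i) ^ α i) := by
      intro lam
      rw [hΦ, map_sum]
      refine Finset.sum_congr rfl fun α hα => ?_
      rw [map_mul, map_mul, eval_bind₁', eval_C, map_prod]
      simp [mul_comm]
    have hΦ0 : Φ = 0 := by
      apply mv_zero_of_eval_zero Φ (fun _ => {c : ℂ | ‖c‖ = 1}) (fun _ => circle_infinite)
      intro lam hlam
      have hsphere : (∑ i, ‖lam i * z i‖ ^ 2 = 1) := by
        have : ∀ i, ‖lam i * z i‖ ^ 2 = ‖z i‖ ^ 2 := by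
          intro i; rw [norm_mul, hlam i, one_mul]
        rw [Finset.sum_congr rfl (fun i _ => this i), hz]
      have hh := h (fun i => lam i * z i) hsphere
      rw [hevalΦ]
      have : ∀ α ∈ A, eval (fun i => lam i * z i) (R α) * (∏ i, lam i ^ (d - α i)) *
          (∏ i, (starRingEnd ℂ) (z i) ^ α i) =
          (∏ i, lam i ^ d) * (eval (fun i => lam i * z i) (R α) *
            ∏ i, (starRingEnd ℂ) (lam i * z i) ^ α i) := by
        intro α hα
        rw [mul_comm (∏ i, lam i ^ d), mul_assoc, mul_assoc]
        congr 1
        rw [← Finset.prod_mul_distrib, ← Finset.prod_mul_distrib]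
        refine Finset.prod_congr rfl fun i _ => ?_
        have hll : lam i * (starRingEnd ℂ) (lam i) = 1 := by
          rw [Complex.mul_conj]
          norm_cast
          rw [Complex.normSq_eq_norm_sq, hlam i, one_pow]
        have expand : lam i ^ d = lam i ^ (d - α i) * lam i ^ α i := by
          rw [← pow_add, Nat.sub_add_cancel (hle α hα i)]
        rw [map_mul, mul_pow, expand]
        rw [show (starRingEnd ℂ) (lam i) ^ α i * (starRingEnd ℂ) (z i) ^ α i *
            (lam i ^ (d - α i) * lam i ^ α i) =
            (lam i * (starRingEnd ℂ) (lam i)) ^ α i *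
              ((starRingEnd ℂ) (z i) ^ α i * lam i ^ (d - α i)) from by rw [mul_pow]; ring]
        rw [hll, one_pow, one_mul]
        ring
      rw [Finset.sum_congr rfl this, ← Finset.mul_sum, hh, mul_zero]
    intro lam
    rw [← hevalΦ, hΦ0, map_zero]
  -- Step 2: for each u, simplex identity
  have E2 : ∀ u : Fin n → ℂ, ∀ α ∈ A, eval u (R α) * ∏ i, u i ^ (d - α i) = 0 := by
    intro u
    apply simplex_coeffs_zero hn
    intro t ht ht1
    set z : Fin n → ℂ := fun i => ((Real.sqrt (t i) : ℝ) : ℂ) with hzdef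
    have hznorm : ∀ i, ‖z i‖ ^ 2 = t i := by
      intro i
      rw [hzdef]
      simp only [Complex.norm_real, Real.norm_eq_abs, abs_of_nonneg (Real.sqrt_nonneg _)]
      exact Real.sq_sqrt (ht i).le
    have hzne : ∀ i, z i ≠ 0 := by
      intro i hzi
      have := hznorm i
      rw [hzi] at this
      simp at this
      exact (ht i).ne' this.symm
    have hzsq : ∀ i, z i ^ 2 = (t i : ℂ) := by
      intro i
      rw [hzdef]
      push_cast [← Complex.ofReal_pow]
      norm_cast
      exact Real.sq_sqrt (ht i).le
    have hzsphere : ∑ i, ‖z i‖ ^ 2 = 1 := by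
      rw [Finset.sum_congr rfl (fun i _ => hznorm i), ht1]
    have := E1 z hzsphere (fun i => u i / z i)
    have hcong : ∀ α ∈ A,
        eval (fun i => u i / z i * z i) (R α) * (∏ i, (u i / z i) ^ (d - α i)) *
          (∏ i, (starRingEnd ℂ) (z i) ^ α i) * (∏ i, z i ^ d) =
        (eval u (R α) * ∏ i, u i ^ (d - α i)) * ∏ i, (t i : ℂ) ^ α i := by
      intro α hα
      have hu : (fun i => u i / z i * z i) = u := by
        funext i; rw [div_mul_cancel₀ _ (hzne i)]
      rw [hu, mul_assoc, mul_assoc, mul_assoc]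
      congr 1
      rw [← Finset.prod_mul_distrib, ← Finset.prod_mul_distrib]
      rw [← Finset.prod_mul_distrib]
      refine Finset.prod_congr rfl fun i _ => ?_
      have hconj : (starRingEnd ℂ) (z i) = z i := by
        rw [hzdef]; exact Complex.conj_ofReal _
      have hzd : z i ^ d = z i ^ (d - α i) * z i ^ α i := by
        rw [← pow_add, Nat.sub_add_cancel (hle α hα i)]
      have hz1 : z i ^ (d - α i) ≠ 0 := pow_ne_zero _ (hzne i)
      rw [hconj, div_pow, hzd]
      have key : z i ^ α i * z i ^ α i = (t i : ℂ) ^ α i := by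
        rw [← pow_add, ← two_mul, pow_mul, hzsq i]
      rw [div_mul_eq_mul_div, div_eq_iff hz1, ← key]
      ring
    have h2 := congrArg (· * (∏ i, z i ^ d)) this
    simp only [zero_mul] at h2
    rw [Finset.sum_mul] at h2
    rw [← Finset.sum_congr rfl hcong]
    exact h2
  -- Step 3: conclude R α = 0
  intro α hα
  have hprod : (R α) * ∏ i, (X i : MvPolynomial (Fin n) ℂ) ^ (d - α i) = 0 := by
    apply MvPolynomial.funext (q := 0)
    intro x
    rw [map_zero, map_mul, map_prod]
    simpa using E2 x α hα
  rcases mul_eq_zero.mp hprod with h0 | h0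
  · exact h0
  · exfalso
    have := congrArg (eval (fun _ => (1:ℂ))) h0
    simp at this

end Aux

open MvPolynomial in
/-- For a polynomial sphere map `H` of degree `d` with reflection
matrix `V_H` (so `V_H X · conj H_n^d = X · conj H` on the sphere for all constant
`X ∈ ℂᵐ`), one has `V_H H = H_n^d` and `H = ᵗ(conj V_H) H_n^d` on the sphere. -/
theorem reflection_matrix_tensor_identities
    (n m d : ℕ) (hn : 2 ≤ n)
    (P : Fin m → MvPolynomial (Fin n) ℂ)
    (hPdeg : ∀ j, (P j).totalDegree ≤ d)
    (hPsphere : ∀ z : Fin n → ℂ, (∑ i, ‖z i‖ ^ 2 = 1) →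
      ∑ j, ‖MvPolynomial.eval z (P j)‖ ^ 2 = 1)
    (V : (Fin n → ℕ) → Fin m → MvPolynomial (Fin n) ℂ)
    (hV : ∀ (X : Fin m → ℂ) (z : Fin n → ℂ), (∑ i, ‖z i‖ ^ 2 = 1) →
      ∑ α ∈ Finset.piAntidiag (Finset.univ : Finset (Fin n)) d,
          (∑ j, MvPolynomial.eval z (V α j) * X j) * (starRingEnd ℂ) (homComp α z) =
        ∑ j, X j * (starRingEnd ℂ) (MvPolynomial.eval z (P j))) :
    ∀ z : Fin n → ℂ, (∑ i, ‖z i‖ ^ 2 = 1) →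
      (∀ α ∈ Finset.piAntidiag (Finset.univ : Finset (Fin n)) d,
        ∑ j, MvPolynomial.eval z (V α j) * MvPolynomial.eval z (P j) = homComp α z) ∧
      (∀ j, MvPolynomial.eval z (P j) =
        ∑ α ∈ Finset.piAntidiag (Finset.univ : Finset (Fin n)) d,
          (starRingEnd ℂ) (MvPolynomial.eval z (V α j)) * homComp α z) := by
  classical
  set A := Finset.piAntidiag (Finset.univ : Finset (Fin n)) d with hA
  have hmulconj : ∀ w : ℂ, w * (starRingEnd ℂ) w = ((‖w‖ ^ 2 : ℝ) : ℂ) := by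
    intro w
    rw [Complex.mul_conj]
    norm_cast
    rw [Complex.normSq_eq_norm_sq]
  -- (★): for each j, on the sphere
  have hstar : ∀ z : Fin n → ℂ, (∑ i, ‖z i‖ ^ 2 = 1) → ∀ j,
      ∑ α ∈ A, eval z (V α j) * (starRingEnd ℂ) (homComp α z) =
        (starRingEnd ℂ) (eval z (P j)) := by
    intro z hz j
    have := hV (Pi.single j 1) z hz
    rw [Finset.sum_eq_single j] at this
    · rw [Pi.single_eq_same, one_mul] at this
      rw [← this]
      refine Finset.sum_congr rfl fun α _ => ?_
      congr 1
      rw [Finset.sum_eq_single j]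
      · rw [Pi.single_eq_same, mul_one]
      · intro b _ hb; rw [Pi.single_eq_of_ne hb, mul_zero]
      · intro hj; exact absurd (Finset.mem_univ j) hj
    · intro b _ hb; rw [Pi.single_eq_of_ne hb, zero_mul]
    · intro hj; exact absurd (Finset.mem_univ j) hj
  -- the homogeneous map sums to 1 on the sphere
  have hhomsum : ∀ z : Fin n → ℂ, (∑ i, ‖z i‖ ^ 2 = 1) →
      ∑ α ∈ A, homComp α z * (starRingEnd ℂ) (homComp α z) = 1 := by
    intro z hz
    have hnorm : ∀ α ∈ A, ‖homComp α z‖ ^ 2 =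
        (Nat.multinomial Finset.univ α : ℝ) * ∏ i, (‖z i‖ ^ 2) ^ α i := by
      intro α hα
      rw [homComp, norm_mul, mul_pow]
      congr 1
      · rw [Complex.norm_real, Real.norm_eq_abs, abs_of_nonneg (Real.sqrt_nonneg _),
          Real.sq_sqrt (Nat.cast_nonneg _)]
      · rw [norm_prod, ← Finset.prod_pow]
        refine Finset.prod_congr rfl fun i _ => ?_
        rw [norm_pow, ← pow_mul, ← pow_mul, mul_comm (α i) 2]
    calc ∑ α ∈ A, homComp α z * (starRingEnd ℂ) (homComp α z)
        = ∑ α ∈ A, ((‖homComp α z‖ ^ 2 : ℝ) : ℂ) :=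
          Finset.sum_congr rfl fun α _ => hmulconj _
      _ = (((∑ α ∈ A, ‖homComp α z‖ ^ 2 : ℝ)) : ℂ) := by push_cast; rfl
      _ = 1 := by
          rw [Finset.sum_congr rfl hnorm]
          have := Finset.sum_pow_eq_sum_piAntidiag (Finset.univ : Finset (Fin n))
            (fun i => ‖z i‖ ^ 2) d
          rw [hz, one_pow] at this
          rw [← hA] at this
          rw [← this]
          norm_num
  -- combined identity
  intro z hz
  have hPsum : ∑ j, eval z (P j) * (starRingEnd ℂ) (eval z (P j)) = 1 := by
    calc ∑ j, eval z (P j) * (starRingEnd ℂ) (eval z (P j))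
        = ∑ j, ((‖eval z (P j)‖ ^ 2 : ℝ) : ℂ) := Finset.sum_congr rfl fun j _ => hmulconj _
      _ = (((∑ j, ‖eval z (P j)‖ ^ 2 : ℝ)) : ℂ) := by push_cast; rfl
      _ = 1 := by rw [hPsphere z hz]; norm_num
  -- define the difference polynomials
  set c : (Fin n → ℕ) → ℝ := fun α => Real.sqrt (Nat.multinomial Finset.univ α) with hc
  set R : (Fin n → ℕ) → MvPolynomial (Fin n) ℂ := fun α =>
    C ((c α : ℝ) : ℂ) * ((∑ j, V α j * P j) - C ((c α : ℝ) : ℂ) * ∏ i, (X i : MvPolynomial (Fin n) ℂ) ^ α i) with hR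
  have hevalR : ∀ (w : Fin n → ℂ) α, eval w (R α) =
      ((c α : ℝ) : ℂ) * ((∑ j, eval w (V α j) * eval w (P j)) - homComp α w) := by
    intro w α
    rw [hR]
    simp only [map_mul, map_sub, map_sum, eval_C, map_prod, map_pow, eval_X]
    rfl
  have hconjhom : ∀ (w : Fin n → ℂ) α, (starRingEnd ℂ) (homComp α w) =
      ((c α : ℝ) : ℂ) * ∏ i, (starRingEnd ℂ) (w i) ^ α i := by
    intro w α
    rw [homComp, map_mul, Complex.conj_ofReal, map_prod]
    simp only [map_pow]
    rfl
  have hkey : ∀ α ∈ A, R α = 0 := by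
    apply keyC (lt_of_lt_of_le (by norm_num) hn)
    intro w hw
    have hVP := hV (fun j => eval w (P j)) w hw
    have hPsum' : ∑ j, eval w (P j) * (starRingEnd ℂ) (eval w (P j)) = 1 := by
      calc ∑ j, eval w (P j) * (starRingEnd ℂ) (eval w (P j))
          = ∑ j, ((‖eval w (P j)‖ ^ 2 : ℝ) : ℂ) := Finset.sum_congr rfl fun j _ => hmulconj _
        _ = (((∑ j, ‖eval w (P j)‖ ^ 2 : ℝ)) : ℂ) := by push_cast; rfl
        _ = 1 := by rw [hPsphere w hw]; norm_num
    rw [hPsum'] at hVP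
    have hhom := hhomsum w hw
    calc ∑ α ∈ A, eval w (R α) * ∏ i, (starRingEnd ℂ) (w i) ^ α i
        = ∑ α ∈ A, ((∑ j, eval w (V α j) * eval w (P j)) - homComp α w) *
            (starRingEnd ℂ) (homComp α w) := by
          refine Finset.sum_congr rfl fun α _ => ?_
          rw [hevalR, hconjhom]
          ring
      _ = (∑ α ∈ A, (∑ j, eval w (V α j) * eval w (P j)) * (starRingEnd ℂ) (homComp α w))
          - ∑ α ∈ A, homComp α w * (starRingEnd ℂ) (homComp α w) := by
          rw [← Finset.sum_sub_distrib]
          refine Finset.sum_congr rfl fun α _ => ?_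
          ring
      _ = 0 := by rw [hVP, hhom, sub_self]
  constructor
  · intro α hα
    have h0 := hkey α hα
    have := hevalR z α
    rw [h0, map_zero] at this
    have hcne : ((c α : ℝ) : ℂ) ≠ 0 := by
      simp only [ne_eq, Complex.ofReal_eq_zero]
      rw [hc]
      exact (Real.sqrt_pos.mpr (by exact_mod_cast Nat.multinomial_pos _ _)).ne'
    have := (mul_eq_zero.mp this.symm).resolve_left hcne
    exact sub_eq_zero.mp this
  · intro j
    have := hstar z hz j
    have h2 := congrArg (starRingEnd ℂ) this
    rw [map_sum] at h2
    rw [Complex.conj_conj] at h2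
    rw [← h2]
    refine Finset.sum_congr rfl fun α _ => ?_
    rw [map_mul, Complex.conj_conj]
end

section
/- Let P : ℂ^n → ℂ^{K(n,d)} be a polynomial sphere map of degree d from S^{2n-1} to S^{2K(n,d)-1} whose top homogeneous part P_d equals U H_n^d for a unitary matrix U. Then P = U H_n^d; i.e. a polynomial sphere map whose degree-d homogeneous part is unitarily the homogeneous map has no lower-order terms. -/
open Finset

/-- The component of the homogeneous sphere map `H_n^d` at `α`, as a polynomial:
`√(d!/α!) z^α`. -/
noncomputable def homPoly {n : ℕ} (α : Fin n → ℕ) : MvPolynomial (Fin n) ℂ :=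
  MvPolynomial.C ((Real.sqrt (Nat.multinomial Finset.univ α) : ℂ)) *
    ∏ i, MvPolynomial.X i ^ α i

namespace SphereAux

open MvPolynomial Complex

lemma circle_infinite : {w : ℂ | ‖w‖ = 1}.Infinite := by
  apply Set.infinite_of_injective_forall_mem
    (f := fun t : ℝ => (1 + t * Complex.I) / (1 - t * Complex.I))
  · intro s t hst
    have hs : (1 - (s : ℂ) * Complex.I) ≠ 0 := fun h => by simpa using congrArg Complex.re h
    have ht : (1 - (t : ℂ) * Complex.I) ≠ 0 := fun h => by simpa using congrArg Complex.re h
    rw [div_eq_div_iff hs ht] at hst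
    have h2 : (2 : ℂ) * Complex.I * s = 2 * Complex.I * t := by ring_nf at hst ⊢; linear_combination hst
    have h3 : (s : ℂ) = t := by
      have h4 : (2 : ℂ) * Complex.I ≠ 0 := by simp [Complex.I_ne_zero]
      exact mul_left_cancel₀ h4 h2
    exact_mod_cast h3
  · intro t
    have h1 : ‖(1 + (t : ℂ) * Complex.I)‖ = ‖(1 - (t : ℂ) * Complex.I)‖ := by
      have e1 : ((1 : ℂ) + t * Complex.I) * (starRingEnd ℂ) (1 + t * Complex.I)
          = ((1 : ℂ) - t * Complex.I) * (starRingEnd ℂ) (1 - t * Complex.I) := by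
        simp only [map_add, map_sub, map_mul, map_one, Complex.conj_ofReal, Complex.conj_I]
        ring
      rw [Complex.mul_conj', Complex.mul_conj'] at e1
      have h2 : ‖(1 : ℂ) + t * Complex.I‖ ^ 2 = ‖(1 : ℂ) - t * Complex.I‖ ^ 2 := by
        exact_mod_cast e1
      nlinarith [norm_nonneg ((1 : ℂ) + t * Complex.I), norm_nonneg ((1 : ℂ) - t * Complex.I)]
    have ht : (1 - (t : ℂ) * Complex.I) ≠ 0 := fun h => by simpa using congrArg Complex.re h
    simp only [Set.mem_setOf_eq, norm_div, h1]
    rw [div_self (norm_ne_zero_iff.mpr ht)]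

lemma poly_eq_zero_of_circle (F : Polynomial ℂ) (h : ∀ w : ℂ, ‖w‖ = 1 → F.eval w = 0) :
    F = 0 :=
  F.eq_zero_of_infinite_isRoot (circle_infinite.mono fun w hw => h w hw)

lemma eval_smul_homog {n k : ℕ} {p : MvPolynomial (Fin n) ℂ}
    (hp : p.IsHomogeneous k) (c : ℂ) (z : Fin n → ℂ) :
    eval (c • z) p = c ^ k * eval z p := by
  rw [eval_eq', eval_eq', Finset.mul_sum]
  apply Finset.sum_congr rfl
  intro m hm
  have hdeg : ∑ i, m i = k := by
    have h1 := hp (MvPolynomial.mem_support_iff.mp hm)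
    rw [← h1, Finsupp.weight_apply]
    rw [Finsupp.sum]
    rw [Finset.sum_subset (Finset.subset_univ m.support)]
    · simp
    · intro i _ hi
      simp [Finsupp.notMem_support_iff.mp hi]
  have : ∏ i, (c • z) i ^ m i = c ^ k * ∏ i, z i ^ m i := by
    simp only [Pi.smul_apply, smul_eq_mul, mul_pow]
    rw [Finset.prod_mul_distrib, Finset.prod_pow_eq_pow_sum, hdeg]
  rw [this]; ring


lemma eval_map_ofReal {σ : Type*} (q : MvPolynomial σ ℝ) (x : σ → ℝ) :
    eval (fun i => (x i : ℂ)) (map Complex.ofRealHom q) = ((eval x q : ℝ) : ℂ) := by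
  rw [eval_map]
  have h := MvPolynomial.eval₂_comp_left Complex.ofRealHom (RingHom.id ℝ) x q
  rw [eval₂_id, RingHom.comp_id] at h
  exact h.symm

lemma eq_zero_of_eval_real {σ : Type*} (p : MvPolynomial σ ℂ)
    (h : ∀ x : σ → ℝ, eval (fun i => (x i : ℂ)) p = 0) : p = 0 := by
  classical
  set pre : MvPolynomial σ ℝ := ∑ m ∈ p.support, monomial m ((p.coeff m).re) with hpre
  set pim : MvPolynomial σ ℝ := ∑ m ∈ p.support, monomial m ((p.coeff m).im) with hpim
  have hre : ∀ m, pre.coeff m = (p.coeff m).re := by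
    intro m
    rw [hpre, MvPolynomial.coeff_sum]
    simp only [coeff_monomial]
    rw [Finset.sum_ite_eq' p.support m _]
    by_cases hm : m ∈ p.support
    · simp [hm]
    · simp [hm, MvPolynomial.notMem_support_iff.mp hm]
  have him : ∀ m, pim.coeff m = (p.coeff m).im := by
    intro m
    rw [hpim, MvPolynomial.coeff_sum]
    simp only [coeff_monomial]
    rw [Finset.sum_ite_eq' p.support m _]
    by_cases hm : m ∈ p.support
    · simp [hm]
    · simp [hm, MvPolynomial.notMem_support_iff.mp hm]
  have hdecomp : p = map Complex.ofRealHom pre + C Complex.I * map Complex.ofRealHom pim := by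
    apply MvPolynomial.ext
    intro m
    rw [MvPolynomial.coeff_add, MvPolynomial.coeff_map, MvPolynomial.coeff_C_mul,
      MvPolynomial.coeff_map, hre, him]
    simp [Complex.ext_iff]
  have hkey : ∀ x : σ → ℝ, eval x pre = 0 ∧ eval x pim = 0 := by
    intro x
    have h0 := h x
    rw [hdecomp] at h0
    rw [map_add, map_mul, eval_C, eval_map_ofReal, eval_map_ofReal] at h0
    constructor
    · simpa using congrArg Complex.re h0
    · simpa using congrArg Complex.im h0
  have hpre0 : pre = 0 := MvPolynomial.funext fun x => by rw [(hkey x).1, map_zero]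
  have hpim0 : pim = 0 := MvPolynomial.funext fun x => by rw [(hkey x).2, map_zero]
  rw [hdecomp, hpre0, hpim0]
  simp

lemma eq_zero_of_eval_conj_diag {m : ℕ} (R : MvPolynomial (Fin m ⊕ Fin m) ℂ)
    (h : ∀ z : Fin m → ℂ,
      eval (Sum.elim z (fun i => (starRingEnd ℂ) (z i))) R = 0) : R = 0 := by
  classical
  set φ : Fin m ⊕ Fin m → MvPolynomial (Fin m ⊕ Fin m) ℂ :=
    Sum.elim (fun i => X (Sum.inl i) + C Complex.I * X (Sum.inr i))
             (fun i => X (Sum.inl i) - C Complex.I * X (Sum.inr i)) with hφ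
  set ψ : Fin m ⊕ Fin m → MvPolynomial (Fin m ⊕ Fin m) ℂ :=
    Sum.elim (fun i => C (1/2 : ℂ) * (X (Sum.inl i) + X (Sum.inr i)))
             (fun i => C (-(Complex.I/2)) * (X (Sum.inl i) - X (Sum.inr i))) with hψ
  have hbind : ∀ x : (Fin m ⊕ Fin m) → ℂ, ∀ p : MvPolynomial (Fin m ⊕ Fin m) ℂ,
      ∀ g : (Fin m ⊕ Fin m) → MvPolynomial (Fin m ⊕ Fin m) ℂ,
      eval x (bind₁ g p) = eval (fun s => eval x (g s)) p := fun x p g =>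
    eval₂Hom_bind₁ (RingHom.id ℂ) x g p
  have hreal : ∀ u : (Fin m ⊕ Fin m) → ℝ,
      eval (fun i => ((u i : ℝ) : ℂ)) (bind₁ φ R) = 0 := by
    intro u
    rw [hbind]
    set z : Fin m → ℂ := fun i => (u (Sum.inl i) : ℂ) + Complex.I * (u (Sum.inr i) : ℂ) with hz
    have hfun : (fun s => eval (fun i => ((u i : ℝ) : ℂ)) (φ s))
        = Sum.elim z (fun i => (starRingEnd ℂ) (z i)) := by
      funext s
      cases s with
      | inl i => simp [hφ, hz]
      | inr i =>
        simp only [hφ, Sum.elim_inr, Sum.elim_inl, map_sub, map_add, map_mul, eval_X, eval_C, hz]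
        simp [map_add, map_mul, Complex.conj_ofReal, Complex.conj_I]
        ring
    rw [hfun]
    exact h z
  have hR' : bind₁ φ R = 0 := by
    apply eq_zero_of_eval_real
    intro x
    exact hreal x
  have hψφ : ∀ s, bind₁ ψ (φ s) = X s := by
    intro s
    have hI : (C Complex.I : MvPolynomial (Fin m ⊕ Fin m) ℂ) * C (-(Complex.I/2)) =
        C (1/2 : ℂ) := by
      rw [← MvPolynomial.C_mul]
      congr 1
      have := Complex.I_mul_I
      linear_combination (-(1:ℂ)/2) * this
    have hhalf : (C (1/2:ℂ) : MvPolynomial (Fin m ⊕ Fin m) ℂ) + C (1/2) = 1 := by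
      rw [← MvPolynomial.C_add]
      norm_num
    cases s with
    | inl i =>
      simp only [hφ, Sum.elim_inl, map_add, map_mul, bind₁_X_right, bind₁_C_right, hψ,
        Sum.elim_inr]
      linear_combination (X (Sum.inl i) - X (Sum.inr i)) * hI + X (Sum.inl i) * hhalf
    | inr i =>
      simp only [hφ, Sum.elim_inr, Sum.elim_inl, map_sub, map_mul, bind₁_X_right,
        bind₁_C_right, hψ]
      linear_combination (-(X (Sum.inl i) - X (Sum.inr i))) * hI + X (Sum.inr i) * hhalf
  have hRR : R = bind₁ ψ (bind₁ φ R) := by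
    rw [bind₁_bind₁]
    have hx : (fun s => bind₁ ψ (φ s)) = X := funext hψφ
    rw [hx, bind₁_X_left]
    rfl
  rw [hRR, hR', map_zero]

end SphereAux

namespace SphereAux2
open MvPolynomial Complex SphereAux

lemma homPoly_eq_monomial {n : ℕ} (α : Fin n → ℕ) :
    homPoly α = monomial (Finsupp.equivFunOnFinite.symm α)
      ((Real.sqrt (Nat.multinomial Finset.univ α) : ℂ)) := by
  unfold homPoly
  have hαf : ∀ i, (Finsupp.equivFunOnFinite.symm α) i = α i := fun i => rfl
  have h1 : ∏ i, (X i : MvPolynomial (Fin n) ℂ) ^ α i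
      = monomial (Finsupp.equivFunOnFinite.symm α) 1 := by
    rw [← MvPolynomial.prod_X_pow_eq_monomial]
    refine Eq.symm (Finset.prod_subset (Finset.subset_univ _) ?_)
    intro i _ hi
    rw [Finsupp.notMem_support_iff.mp hi, pow_zero]
  rw [h1, MvPolynomial.C_mul_monomial, mul_one]

lemma homPoly_coeff {n : ℕ} (α β : Fin n → ℕ) :
    MvPolynomial.coeff (Finsupp.equivFunOnFinite.symm α) (homPoly β)
      = if β = α then ((Real.sqrt (Nat.multinomial Finset.univ β) : ℝ) : ℂ) else 0 := by
  rw [homPoly_eq_monomial, MvPolynomial.coeff_monomial]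
  by_cases h : β = α
  · rw [if_pos, if_pos h]
    rw [h]
  · rw [if_neg, if_neg h]
    exact fun hh => h (Finsupp.equivFunOnFinite.symm.injective hh)

lemma homPoly_const_ne_zero {n : ℕ} (α : Fin n → ℕ) :
    ((Real.sqrt (Nat.multinomial Finset.univ α) : ℝ) : ℂ) ≠ 0 := by
  have h1 : 0 < Nat.multinomial (Finset.univ : Finset (Fin n)) α := Nat.multinomial_pos _ _
  have h2 : (0:ℝ) < Real.sqrt (Nat.multinomial Finset.univ α) :=
    Real.sqrt_pos.mpr (by exact_mod_cast h1)
  simp only [ne_eq, Complex.ofReal_eq_zero]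
  exact ne_of_gt h2

lemma homPoly_isHomogeneous {n d : ℕ} (α : Fin n → ℕ) (hα : ∑ i, α i = d) :
    (homPoly α).IsHomogeneous d := by
  rw [homPoly_eq_monomial]
  apply MvPolynomial.isHomogeneous_monomial
  rw [Finsupp.degree_apply]
  rw [Finset.sum_subset (Finset.subset_univ (Finsupp.equivFunOnFinite.symm α).support)]
  · exact hα
  · intro i _ hi
    exact Finsupp.notMem_support_iff.mp hi

lemma key_indep {n d : ℕ}
    (M : {α // α ∈ Finset.piAntidiag (Finset.univ : Finset (Fin n)) d} →
      MvPolynomial (Fin n) ℂ)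
    (h : ∀ z : Fin n → ℂ,
      ∑ b, eval z (homPoly b.1) * (starRingEnd ℂ) (eval z (M b)) = 0) :
    ∀ b, M b = 0 := by
  classical
  set N : _ → MvPolynomial (Fin n) ℂ := fun b => map (starRingEnd ℂ) (M b) with hN
  have hconj : ∀ (p : MvPolynomial (Fin n) ℂ) (z : Fin n → ℂ),
      (starRingEnd ℂ) (eval z p)
        = eval (fun i => (starRingEnd ℂ) (z i)) (map (starRingEnd ℂ) p) := by
    intro p z
    rw [eval_map]
    have h2 := MvPolynomial.eval₂_comp_left (starRingEnd ℂ) (RingHom.id ℂ) z p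
    rw [eval₂_id, RingHom.comp_id] at h2
    exact h2
  set R : MvPolynomial (Fin n ⊕ Fin n) ℂ :=
    ∑ b, rename Sum.inl (homPoly b.1) * rename Sum.inr (N b) with hR
  have hevalR : ∀ (z w : Fin n → ℂ), eval (Sum.elim z w) R
      = ∑ b, eval z (homPoly b.1) * eval w (N b) := by
    intro z w
    rw [hR, map_sum]
    apply Finset.sum_congr rfl
    intro b _
    rw [map_mul, eval_rename, eval_rename]
    rfl
  have hR0 : R = 0 := by
    apply eq_zero_of_eval_conj_diag
    intro z
    rw [hevalR, ← h z]
    apply Finset.sum_congr rfl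
    intro b _
    rw [hconj]
  have hNw : ∀ b w, eval w (N b) = 0 := by
    intro b0 w
    have hzw : ∀ z, ∑ b, eval z (homPoly b.1) * eval w (N b) = 0 := by
      intro z
      rw [← hevalR, hR0, map_zero]
    set S : MvPolynomial (Fin n) ℂ := ∑ b, C (eval w (N b)) * homPoly b.1 with hS
    have hS0 : S = 0 := by
      apply MvPolynomial.funext (q := 0)
      intro x
      rw [map_zero, hS, map_sum, ← hzw x]
      apply Finset.sum_congr rfl
      intro b _
      rw [map_mul, eval_C]
      ring
    have hcoeff := congrArg (MvPolynomial.coeff (Finsupp.equivFunOnFinite.symm b0.1)) hS0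
    rw [hS, MvPolynomial.coeff_sum] at hcoeff
    simp only [MvPolynomial.coeff_C_mul, homPoly_coeff] at hcoeff
    rw [Finset.sum_eq_single b0] at hcoeff
    · rw [if_pos rfl] at hcoeff
      simp only [MvPolynomial.coeff_zero] at hcoeff
      rcases mul_eq_zero.mp hcoeff with h1 | h1
      · exact h1
      · exact absurd h1 (homPoly_const_ne_zero _)
    · intro b _ hbne
      rw [if_neg, mul_zero]
      exact fun hh => hbne (Subtype.ext hh)
    · intro hb
      exact absurd (Finset.mem_univ b0) hb
  intro b
  have hN0 : N b = 0 := MvPolynomial.funext fun x => by rw [hNw b x, map_zero]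
  have hmm := congrArg (map (starRingEnd ℂ)) hN0
  rw [hN, MvPolynomial.map_map] at hmm
  have hid : (starRingEnd ℂ).comp (starRingEnd ℂ) = RingHom.id ℂ :=
    RingHom.ext fun z => Complex.conj_conj z
  rw [hid, MvPolynomial.map_id, map_zero] at hmm
  exact hmm

end SphereAux2

open MvPolynomial Complex SphereAux SphereAux2 in
/-- A polynomial sphere map `P : S^{2n-1} → S^{2K(n,d)-1}` of degree
`d` whose top-degree homogeneous part equals `U H_n^d` for a unitary matrix `U` has no
lower-order terms: `P = U H_n^d`. -/
theorem polynomial_sphere_map_with_homogeneous_top_is_homogeneous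
    (n d : ℕ) (hn : 2 ≤ n) (hd : 1 ≤ d)
    (P : {α // α ∈ Finset.piAntidiag (Finset.univ : Finset (Fin n)) d} →
      MvPolynomial (Fin n) ℂ)
    (hPdeg : ∀ a, (P a).totalDegree ≤ d)
    (hPsphere : ∀ z : Fin n → ℂ, (∑ i, ‖z i‖ ^ 2 = 1) →
      ∑ a, ‖MvPolynomial.eval z (P a)‖ ^ 2 = 1)
    (U : Matrix {α // α ∈ Finset.piAntidiag (Finset.univ : Finset (Fin n)) d}
      {α // α ∈ Finset.piAntidiag (Finset.univ : Finset (Fin n)) d} ℂ)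
    (hU : U ∈ Matrix.unitaryGroup
      {α // α ∈ Finset.piAntidiag (Finset.univ : Finset (Fin n)) d} ℂ)
    (htop : ∀ a, MvPolynomial.homogeneousComponent d (P a) =
      ∑ b, MvPolynomial.C (U a b) * homPoly b.1) :
    ∀ a, P a = ∑ b, MvPolynomial.C (U a b) * homPoly b.1 := by
  classical
  -- every `P a` is the sum of its homogeneous components up to degree `d`
  have hPsum : ∀ a, ∑ j ∈ Finset.range (d+1), MvPolynomial.homogeneousComponent j (P a)
      = P a := by
    intro a
    calc ∑ j ∈ Finset.range (d+1), MvPolynomial.homogeneousComponent j (P a)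
        = ∑ j ∈ Finset.range ((P a).totalDegree + 1),
            MvPolynomial.homogeneousComponent j (P a) := by
          refine Eq.symm (Finset.sum_subset ?_ ?_)
          · exact Finset.range_subset_range.mpr (by have := hPdeg a; omega)
          · intro j hj1 hj2
            apply MvPolynomial.homogeneousComponent_eq_zero
            rw [Finset.mem_range] at hj1 hj2
            omega
      _ = P a := MvPolynomial.sum_homogeneousComponent (P a)
  -- the sphere condition, complexified
  have sphereC : ∀ z : Fin n → ℂ, (∑ i, ‖z i‖ ^ 2 = 1) →
      ∑ a, eval z (P a) * (starRingEnd ℂ) (eval z (P a)) = 1 := by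
    intro z hz
    have h1 := hPsphere z hz
    have h2 : ∑ a, eval z (P a) * (starRingEnd ℂ) (eval z (P a))
        = ((∑ a, ‖eval z (P a)‖ ^ 2 : ℝ) : ℂ) := by
      push_cast
      refine Finset.sum_congr rfl fun a _ => ?_
      rw [Complex.mul_conj']
    rw [h2, h1, Complex.ofReal_one]
  -- all homogeneous components of degree `< d` vanish
  have main : ∀ k, k < d → ∀ a, MvPolynomial.homogeneousComponent k (P a) = 0 := by
    intro k
    induction k using Nat.strong_induction_on with
    | _ k IH =>
    intro hk
    -- Step 1 : vanishing of the mixed term on the sphere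
    have step1 : ∀ z : Fin n → ℂ, (∑ i, ‖z i‖ ^ 2 = 1) →
        ∑ a, eval z (MvPolynomial.homogeneousComponent d (P a)) * (starRingEnd ℂ)
          (eval z (MvPolynomial.homogeneousComponent k (P a))) = 0 := by
      intro z hz
      set e : _ → ℕ → ℂ :=
        fun a j => eval z (MvPolynomial.homogeneousComponent j (P a)) with he
      set p : _ → Polynomial ℂ := fun a =>
        ∑ j ∈ Finset.range (d+1), Polynomial.C (e a j) * Polynomial.X ^ j with hp
      set q : _ → Polynomial ℂ := fun a =>
        ∑ l ∈ Finset.range (d+1),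
          Polynomial.C ((starRingEnd ℂ) (e a l)) * Polynomial.X ^ (d - l) with hq
      have hevalp : ∀ a (ω : ℂ), (p a).eval ω = eval (ω • z) (P a) := by
        intro a ω
        rw [hp]
        simp only [Polynomial.eval_finset_sum, Polynomial.eval_mul, Polynomial.eval_C,
          Polynomial.eval_pow, Polynomial.eval_X]
        rw [← hPsum a, map_sum]
        refine Finset.sum_congr rfl fun j _ => ?_
        rw [eval_smul_homog (MvPolynomial.homogeneousComponent_isHomogeneous j (P a)) ω z, he]
        ring
      have hevalq : ∀ a (ω : ℂ), ‖ω‖ = 1 →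
          (q a).eval ω = ω ^ d * (starRingEnd ℂ) ((p a).eval ω) := by
        intro a ω hω
        have hω0 : ω ≠ 0 := by
          intro h0; rw [h0] at hω; simp at hω
        have hωc : ω * (starRingEnd ℂ) ω = 1 := by
          rw [Complex.mul_conj', hω]; norm_num
        rw [hq, hp]
        simp only [Polynomial.eval_finset_sum, Polynomial.eval_mul, Polynomial.eval_C,
          Polynomial.eval_pow, Polynomial.eval_X, map_sum, map_mul, map_pow]
        rw [Finset.mul_sum]
        refine Finset.sum_congr rfl fun l hl => ?_
        rw [Finset.mem_range] at hl
        have h1 : ω ^ (d - l) * ω ^ l = ω ^ d := by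
          rw [← pow_add]; congr 1; omega
        have h4 : ω ^ d * (starRingEnd ℂ) ω ^ l = ω ^ (d - l) := by
          rw [← h1, mul_assoc, ← mul_pow, hωc, one_pow, mul_one]
        rw [← h4]; ring
      set F : Polynomial ℂ := (∑ a, p a * q a) - Polynomial.X ^ d with hF
      have hF0 : F = 0 := by
        apply poly_eq_zero_of_circle
        intro ω hω
        rw [hF, Polynomial.eval_sub, Polynomial.eval_finset_sum, Polynomial.eval_pow,
          Polynomial.eval_X]
        have hsph : ∑ i, ‖(ω • z) i‖ ^ 2 = 1 := by
          simp only [Pi.smul_apply, smul_eq_mul, norm_mul, hω, mul_pow, one_pow, one_mul]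
          exact hz
        have h5 := sphereC (ω • z) hsph
        have h6 : ∑ a, (p a * q a).eval ω
            = (∑ a, eval (ω • z) (P a) * (starRingEnd ℂ) (eval (ω • z) (P a))) * ω ^ d := by
          rw [Finset.sum_mul]
          refine Finset.sum_congr rfl fun a _ => ?_
          rw [Polynomial.eval_mul, hevalq a ω hω, hevalp]
          ring
        rw [h6, h5]; ring
      -- extract the coefficient of `X ^ (2d - k)`
      have hcp : ∀ a u, (p a).coeff u = if u ≤ d then e a u else 0 := by
        intro a u
        rw [hp]
        simp only [Polynomial.finset_sum_coeff, Polynomial.coeff_C_mul, Polynomial.coeff_X_pow,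
          mul_ite, mul_one, mul_zero]
        rw [Finset.sum_ite_eq (Finset.range (d+1)) u (fun j => e a j)]
        simp [Nat.lt_succ_iff]
      have hcq : ∀ a v, (q a).coeff v
          = if v ≤ d then (starRingEnd ℂ) (e a (d - v)) else 0 := by
        intro a v
        rw [hq]
        simp only [Polynomial.finset_sum_coeff, Polynomial.coeff_C_mul, Polynomial.coeff_X_pow,
          mul_ite, mul_one, mul_zero]
        by_cases hv : v ≤ d
        · rw [if_pos hv]
          refine (Finset.sum_eq_single_of_mem (d - v)
            (Finset.mem_range.mpr (by omega)) ?_).trans ?_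
          · intro l hl hlne
            rw [Finset.mem_range] at hl
            rw [if_neg]
            omega
          · rw [if_pos (by omega : v = d - (d - v))]
        · rw [if_neg hv]
          refine Finset.sum_eq_zero fun l hl => ?_
          rw [Finset.mem_range] at hl
          rw [if_neg]
          omega
      have hterm : ∀ a, (p a * q a).coeff (2*d - k)
          = e a d * (starRingEnd ℂ) (e a k) := by
        intro a
        rw [Polynomial.coeff_mul]
        have hmm : ((d : ℕ), d - k) ∈ Finset.HasAntidiagonal.antidiagonal (2*d - k) := by
          rw [Finset.HasAntidiagonal.mem_antidiagonal]; omega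
        refine (Finset.sum_eq_single_of_mem _ hmm ?_).trans ?_
        · rintro ⟨u, v⟩ hmem hne
          rw [Finset.HasAntidiagonal.mem_antidiagonal] at hmem
          have hne' : ¬(u = d ∧ v = d - k) := by
            intro hh
            exact hne (by rw [hh.1, hh.2])
          dsimp only
          rw [hcp, hcq]
          by_cases hu : u ≤ d
          · by_cases hv : v ≤ d
            · have hl : d - v < k := by omega
              have h0 : e a (d - v) = 0 := by
                rw [he]
                have := IH (d - v) hl (by omega) a
                simp only [this]
                exact map_zero _
              rw [if_pos hu, if_pos hv, h0, map_zero, mul_zero]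
            · rw [if_neg hv, mul_zero]
          · rw [if_neg hu, zero_mul]
        · dsimp only
          rw [hcp, hcq, if_pos (le_refl d), if_pos (by omega : d - k ≤ d)]
          have hkk : d - (d - k) = k := by omega
          rw [hkk]
      have hcoeffF := congrArg (fun G : Polynomial ℂ => G.coeff (2*d - k)) hF0
      simp only [Polynomial.coeff_zero] at hcoeffF
      rw [hF, Polynomial.coeff_sub, Polynomial.finset_sum_coeff, Polynomial.coeff_X_pow,
        if_neg (by omega : ¬ 2*d - k = d), sub_zero] at hcoeffF
      rw [Finset.sum_congr rfl (fun a _ => hterm a)] at hcoeffF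
      exact hcoeffF
    -- Step 2 : vanishing of the mixed term everywhere, by homogeneity
    have step2 : ∀ z : Fin n → ℂ,
        ∑ a, eval z (MvPolynomial.homogeneousComponent d (P a)) * (starRingEnd ℂ)
          (eval z (MvPolynomial.homogeneousComponent k (P a))) = 0 := by
      intro z
      by_cases hz0 : ∀ i, z i = 0
      · refine Finset.sum_eq_zero fun a _ => ?_
        have hzz : z = (0 : ℂ) • z := by
          funext i; simp [hz0 i]
        rw [hzz, eval_smul_homog (MvPolynomial.homogeneousComponent_isHomogeneous d (P a)),
          zero_pow (by omega : d ≠ 0), zero_mul, zero_mul]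
      · push_neg at hz0
        obtain ⟨i0, hi0⟩ := hz0
        set s : ℝ := ∑ i, ‖z i‖ ^ 2 with hs
        have hspos : 0 < s := by
          rw [hs]
          refine Finset.sum_pos' (fun i _ => by positivity) ⟨i0, Finset.mem_univ i0, pow_pos (norm_pos_iff.mpr hi0) 2⟩
        set r : ℝ := Real.sqrt s with hr
        have hrpos : 0 < r := Real.sqrt_pos.mpr hspos
        have hr2 : r ^ 2 = s := Real.sq_sqrt hspos.le
        set w : Fin n → ℂ := ((r⁻¹ : ℝ) : ℂ) • z with hw
        have hwz : ∑ i, ‖w i‖ ^ 2 = 1 := by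
          rw [hw]
          simp only [Pi.smul_apply, smul_eq_mul, norm_mul, Complex.norm_real, Real.norm_eq_abs,
            abs_of_pos (inv_pos.mpr hrpos), mul_pow]
          rw [← Finset.mul_sum, ← hs, inv_pow, hr2, inv_mul_cancel₀ (ne_of_gt hspos)]
        have hzw : z = ((r : ℝ) : ℂ) • w := by
          rw [hw, smul_smul]
          have hone : ((r : ℝ) : ℂ) * ((r⁻¹ : ℝ) : ℂ) = 1 := by
            rw [← Complex.ofReal_mul, mul_inv_cancel₀ (ne_of_gt hrpos), Complex.ofReal_one]
          rw [hone, one_smul]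
        have h6 := step1 w hwz
        have h7 : ∀ a, eval z (MvPolynomial.homogeneousComponent d (P a)) * (starRingEnd ℂ)
              (eval z (MvPolynomial.homogeneousComponent k (P a)))
            = (((r : ℝ) : ℂ) ^ d * ((r : ℝ) : ℂ) ^ k) *
              (eval w (MvPolynomial.homogeneousComponent d (P a)) * (starRingEnd ℂ)
                (eval w (MvPolynomial.homogeneousComponent k (P a)))) := by
          intro a
          conv_lhs => rw [hzw]
          rw [eval_smul_homog (MvPolynomial.homogeneousComponent_isHomogeneous d (P a)),
            eval_smul_homog (MvPolynomial.homogeneousComponent_isHomogeneous k (P a)),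
            map_mul, map_pow, Complex.conj_ofReal]
          ring
        rw [Finset.sum_congr rfl (fun a _ => h7 a), ← Finset.mul_sum, h6, mul_zero]
    -- Step 3 : use linear independence and unitarity
    set Mb : _ → MvPolynomial (Fin n) ℂ :=
      fun b => ∑ a, MvPolynomial.C ((starRingEnd ℂ) (U a b)) *
        MvPolynomial.homogeneousComponent k (P a) with hMb
    have hMb0 : ∀ b, Mb b = 0 := by
      apply key_indep (d := d)
      intro z
      have hMbeval : ∀ b, (starRingEnd ℂ) (eval z (Mb b))
          = ∑ a, U a b * (starRingEnd ℂ)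
              (eval z (MvPolynomial.homogeneousComponent k (P a))) := by
        intro b
        have h8 : eval z (Mb b) = ∑ a, (starRingEnd ℂ) (U a b) *
            eval z (MvPolynomial.homogeneousComponent k (P a)) := by
          rw [hMb, map_sum]
          exact Finset.sum_congr rfl fun a _ => by rw [map_mul, eval_C]
        rw [h8, map_sum]
        exact Finset.sum_congr rfl fun a _ => by rw [map_mul, Complex.conj_conj]
      calc ∑ b, eval z (homPoly b.1) * (starRingEnd ℂ) (eval z (Mb b))
          = ∑ b, ∑ a, eval z (homPoly b.1) * (U a b * (starRingEnd ℂ)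
              (eval z (MvPolynomial.homogeneousComponent k (P a)))) := by
            exact Finset.sum_congr rfl fun b _ => by rw [hMbeval b, Finset.mul_sum]
        _ = ∑ a, ∑ b, eval z (homPoly b.1) * (U a b * (starRingEnd ℂ)
              (eval z (MvPolynomial.homogeneousComponent k (P a)))) := Finset.sum_comm
        _ = ∑ a, eval z (MvPolynomial.homogeneousComponent d (P a)) * (starRingEnd ℂ)
              (eval z (MvPolynomial.homogeneousComponent k (P a))) := by
            refine Finset.sum_congr rfl fun a _ => ?_
            rw [htop a, map_sum, Finset.sum_mul]
            refine Finset.sum_congr rfl fun b _ => ?_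
            rw [map_mul, eval_C]
            ring
        _ = 0 := step2 z
    intro a
    have hUU : U * star U = 1 := Matrix.mem_unitaryGroup_iff.mp hU
    have hortho : ∀ a', (∑ b, U a b * (starRingEnd ℂ) (U a' b))
        = if a = a' then (1 : ℂ) else 0 := by
      intro a'
      have h1 : (U * star U) a a' = (1 : Matrix _ _ ℂ) a a' := by rw [hUU]
      rw [Matrix.mul_apply] at h1
      simp only [Matrix.star_apply] at h1
      simp only [starRingEnd_apply]
      rw [h1, Matrix.one_apply]
    have hfinal : MvPolynomial.homogeneousComponent k (P a)
        = ∑ b, MvPolynomial.C (U a b) * Mb b := by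
      symm
      calc ∑ b, MvPolynomial.C (U a b) * Mb b
          = ∑ b, ∑ a', MvPolynomial.C (U a b * (starRingEnd ℂ) (U a' b)) *
              MvPolynomial.homogeneousComponent k (P a') := by
            refine Finset.sum_congr rfl fun b _ => ?_
            rw [hMb, Finset.mul_sum]
            refine Finset.sum_congr rfl fun a' _ => ?_
            rw [MvPolynomial.C_mul, mul_assoc]
        _ = ∑ a', ∑ b, MvPolynomial.C (U a b * (starRingEnd ℂ) (U a' b)) *
              MvPolynomial.homogeneousComponent k (P a') := Finset.sum_comm
        _ = ∑ a', MvPolynomial.C (∑ b, U a b * (starRingEnd ℂ) (U a' b)) *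
              MvPolynomial.homogeneousComponent k (P a') := by
            refine Finset.sum_congr rfl fun a' _ => ?_
            rw [← Finset.sum_mul, ← map_sum]
        _ = MvPolynomial.homogeneousComponent k (P a) := by
            simp only [hortho]
            have hite : ∀ a', MvPolynomial.C (if a = a' then (1:ℂ) else 0) *
                MvPolynomial.homogeneousComponent k (P a')
                = if a = a' then MvPolynomial.homogeneousComponent k (P a') else 0 := by
              intro a'
              by_cases h : a = a'
              · rw [if_pos h, if_pos h, map_one, one_mul]
              · rw [if_neg h, if_neg h, map_zero, zero_mul]
            rw [Finset.sum_congr rfl fun a' _ => hite a', Finset.sum_ite_eq,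
              if_pos (Finset.mem_univ a)]
    rw [hfinal]
    exact Finset.sum_eq_zero fun b _ => by rw [hMb0 b, mul_zero]
  -- conclusion
  intro a
  rw [← hPsum a]
  rw [Finset.sum_eq_single_of_mem d (Finset.mem_range.mpr (by omega))]
  · exact htop a
  · intro j hj hjne
    rw [Finset.mem_range] at hj
    exact main j (by omega) a
end
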